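/- arXiv:2307.16197 — 4 statements merged into one kernel-verified Lean document; each statement's English description precedes it below -/
import Mathlib

section
/- Let P_{ln}(t,x) = P_0(t)|x|^{2t-N} with P_0(t) = π^{-N/2} 4^{-t} Γ((N-2t)/2)/Γ(t). Then for every continuous compactly supported φ: ℝ^N → ℝ, lim_{t → 0^+} ∫_{ℝ^N} P_{ln}(t,x) φ(x) dx = φ(0). -/
open MeasureTheory Filter

set_option maxHeartbeats 1000000

noncomputable def P0 (N : ℕ) (t : ℝ) : ℝ :=
  Real.pi ^ (-(N : ℝ)/2) * (4 : ℝ) ^ (-t) * Real.Gamma (((N : ℝ) - 2*t)/2) / Real.Gamma t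

section Aux

open Metric Set

lemma integrable_fun_norm_addHaar' {E : Type*} [NormedAddCommGroup E] [NormedSpace ℝ E]
    [MeasurableSpace E] [BorelSpace E] [Nontrivial E] [FiniteDimensional ℝ E]
    (μ : Measure E) [μ.IsAddHaarMeasure] {f : ℝ → ℝ}
    (hf : IntegrableOn (fun y => y ^ (Module.finrank ℝ E - 1) * f y) (Set.Ioi 0) volume) :
    Integrable (fun x => f ‖x‖) μ := by
  set n := Module.finrank ℝ E - 1 with hn
  have h2 : Integrable ((fun y => y ^ n * f y) ∘ (Subtype.val : Set.Ioi (0:ℝ) → ℝ))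
      (Measure.comap Subtype.val volume) := by
    rwa [← (MeasurableEmbedding.subtype_coe measurableSet_Ioi).integrable_map_iff,
      map_comap_subtype_coe measurableSet_Ioi]
  have h1 : Integrable (fun y : Set.Ioi (0:ℝ) => f y) (Measure.volumeIoiPow n) := by
    rw [Measure.volumeIoiPow, integrable_withDensity_iff
      ((measurable_subtype_coe.pow_const n).ennreal_ofReal)
      (ae_of_all _ fun x => ENNReal.ofReal_lt_top)]
    refine h2.congr (ae_of_all _ fun y => ?_)
    simp only [Function.comp_apply]
    rw [ENNReal.toReal_ofReal (pow_nonneg y.2.out.le _)]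
    ring
  have h3 : Integrable (fun p : sphere (0:E) 1 × Set.Ioi (0:ℝ) => f p.2)
      ((μ.toSphere).prod (Measure.volumeIoiPow n)) := by
    have := ((integrable_const (1:ℝ)) : Integrable _ μ.toSphere).smul_prod h1
    simpa using this
  have h4 := ((μ.measurePreserving_homeomorphUnitSphereProd).integrable_comp_emb
      (Homeomorph.measurableEmbedding _)).2 h3
  have h5 : Integrable ((fun x : E => f ‖x‖) ∘ (Subtype.val : ({0}ᶜ : Set E) → E))
      (Measure.comap Subtype.val μ) := by
    convert h4 using 1; funext x; simp
  have h6 : IntegrableOn (fun x : E => f ‖x‖) ({0}ᶜ) μ := by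
    rwa [IntegrableOn, ← map_comap_subtype_coe (measurableSet_singleton (0:E)).compl,
      (MeasurableEmbedding.subtype_coe (measurableSet_singleton (0:E)).compl).integrable_map_iff]
  rwa [IntegrableOn, restrict_compl_singleton] at h6

lemma oneD_integrable (N : ℕ) (hN : 1 ≤ N) {t R : ℝ} (ht : 0 < t) :
    IntegrableOn (fun y : ℝ => y ^ (N - 1) *
      (Set.Iio R).indicator (fun r : ℝ => r ^ (2*t - (N:ℝ))) y) (Set.Ioi 0) volume := by
  have heq : (fun y : ℝ => y ^ (N - 1) * (Set.Iio R).indicator (fun r : ℝ => r ^ (2*t - (N:ℝ))) y)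
      = (Set.Iio R).indicator (fun r : ℝ => r ^ (N - 1) * r ^ (2*t - (N:ℝ))) := by
    funext y
    by_cases h : y ∈ Set.Iio R <;>
      simp [Set.indicator_of_mem, Set.indicator_of_notMem, h]
  rw [IntegrableOn, heq, integrable_indicator_iff measurableSet_Iio, IntegrableOn,
    Measure.restrict_restrict measurableSet_Iio]
  have hIoo : Set.Iio R ∩ Set.Ioi 0 = Set.Ioo 0 R := by
    ext y; simp [and_comm]
  rw [hIoo]
  have hcongr : ∀ y ∈ Set.Ioo (0:ℝ) R, y ^ (N - 1) * y ^ (2*t - (N:ℝ)) = y ^ (2*t - 1) := by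
    intro y hy
    rw [← Real.rpow_natCast y (N-1), ← Real.rpow_add hy.1]
    congr 1
    rw [Nat.cast_sub hN]
    push_cast; ring
  rcases le_or_gt R 0 with hR | hR
  · rw [Set.Ioo_eq_empty (by linarith)]
    exact integrableOn_empty
  · refine (IntegrableOn.congr_fun ?_ (fun y hy => (hcongr y hy).symm) measurableSet_Ioo)
    have h1 : IntervalIntegrable (fun y : ℝ => y ^ (2*t - 1)) volume 0 R :=
      intervalIntegral.intervalIntegrable_rpow' (by linarith)
    have := (intervalIntegrable_iff_integrableOn_Ioc_of_le hR.le).1 h1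
    exact this.mono_set Set.Ioo_subset_Ioc_self

lemma oneD_integral (N : ℕ) (hN : 1 ≤ N) {t R : ℝ} (ht : 0 < t) (hR : 0 < R) :
    ∫ y in Set.Ioi (0:ℝ), y ^ (N - 1) *
      (Set.Iio R).indicator (fun r : ℝ => r ^ (2*t - (N:ℝ))) y = R ^ (2*t) / (2*t) := by
  have hcongr : ∀ y ∈ Set.Ioo (0:ℝ) R, y ^ (N - 1) * y ^ (2*t - (N:ℝ)) = y ^ (2*t - 1) := by
    intro y hy
    rw [← Real.rpow_natCast y (N-1), ← Real.rpow_add hy.1]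
    congr 1
    rw [Nat.cast_sub hN]
    push_cast; ring
  have heq : ∀ y : ℝ, y ^ (N - 1) * (Set.Iio R).indicator (fun r : ℝ => r ^ (2*t - (N:ℝ))) y
      = (Set.Iio R).indicator (fun r : ℝ => r ^ (N - 1) * r ^ (2*t - (N:ℝ))) y := by
    intro y
    by_cases h : y ∈ Set.Iio R <;>
      simp [Set.indicator_of_mem, Set.indicator_of_notMem, h]
  rw [MeasureTheory.integral_congr_ae (ae_of_all _ heq),
    MeasureTheory.setIntegral_indicator measurableSet_Iio]
  have hIoo : Set.Ioi (0:ℝ) ∩ Set.Iio R = Set.Ioo 0 R := rfl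
  rw [hIoo, MeasureTheory.setIntegral_congr_fun measurableSet_Ioo hcongr,
    Measure.restrict_congr_set Ioo_ae_eq_Ioc, ← intervalIntegral.integral_of_le hR.le,
    integral_rpow (Or.inl (by linarith))]
  rw [Real.zero_rpow (by linarith), sub_add_cancel]
  ring_nf

lemma indicator_ball_eq (N : ℕ) {t R : ℝ} :
    (Metric.ball (0:EuclideanSpace ℝ (Fin N)) R).indicator
        (fun x => ‖x‖ ^ (2*t - (N:ℝ)))
      = fun x => (Set.Iio R).indicator (fun r : ℝ => r ^ (2*t - (N:ℝ))) ‖x‖ := by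
  funext x
  by_cases h : x ∈ Metric.ball (0:EuclideanSpace ℝ (Fin N)) R
  · rw [Set.indicator_of_mem h,
      Set.indicator_of_mem (show ‖x‖ ∈ Set.Iio R from mem_ball_zero_iff.1 h)]
  · rw [Set.indicator_of_notMem h, Set.indicator_of_notMem
      (show ‖x‖ ∉ Set.Iio R from fun hc => h (mem_ball_zero_iff.2 hc))]

lemma kernel_integrableOn (N : ℕ) (hN : 1 ≤ N) {t R : ℝ} (ht : 0 < t) :
    IntegrableOn (fun x : EuclideanSpace ℝ (Fin N) => ‖x‖ ^ (2*t - (N:ℝ)))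
      (Metric.ball 0 R) volume := by
  haveI : Nonempty (Fin N) := Fin.pos_iff_nonempty.1 hN
  rw [← integrable_indicator_iff measurableSet_ball, indicator_ball_eq N]
  apply integrable_fun_norm_addHaar' (μ := (volume : Measure (EuclideanSpace ℝ (Fin N))))
    (f := (Set.Iio R).indicator (fun r : ℝ => r ^ (2*t - (N:ℝ))))
  rw [finrank_euclideanSpace_fin]
  exact oneD_integrable N hN ht

lemma kernel_integral (N : ℕ) (hN : 1 ≤ N) {t R : ℝ} (ht : 0 < t) (hR : 0 < R) :
    ∫ x in Metric.ball (0:EuclideanSpace ℝ (Fin N)) R, ‖x‖ ^ (2*t - (N:ℝ)) =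
      ((N:ℝ) * (volume (Metric.ball (0:EuclideanSpace ℝ (Fin N)) 1)).toReal)
        * (R ^ (2*t) / (2*t)) := by
  haveI : Nonempty (Fin N) := Fin.pos_iff_nonempty.1 hN
  rw [← integral_indicator measurableSet_ball, indicator_ball_eq N,
    integral_fun_norm_addHaar volume ((Set.Iio R).indicator (fun r : ℝ => r ^ (2*t - (N:ℝ))))]
  simp only [nsmul_eq_mul, smul_eq_mul, finrank_euclideanSpace_fin]
  rw [oneD_integral N hN ht hR]
  rw [measureReal_def]
  ring

lemma tendsto_A (N : ℕ) (hN : 1 ≤ N) :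
    Tendsto (fun t : ℝ => P0 N t *
        (((N:ℝ) * (volume (Metric.ball (0:EuclideanSpace ℝ (Fin N)) 1)).toReal) / (2*t)))
      (nhdsWithin 0 (Set.Ioi 0)) (nhds 1) := by
  haveI : Nonempty (Fin N) := Fin.pos_iff_nonempty.1 hN
  set V : ℝ := (N:ℝ) * (volume (Metric.ball (0:EuclideanSpace ℝ (Fin N)) 1)).toReal with hV
  have hΓN : 0 < Real.Gamma ((N:ℝ)/2) := Real.Gamma_pos_of_pos (by positivity)
  have hNpos : (0:ℝ) < N := by exact_mod_cast hN
  have hVval : V = (N:ℝ) * (Real.sqrt Real.pi ^ N / Real.Gamma ((N:ℝ)/2 + 1)) := by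
    rw [hV, EuclideanSpace.volume_ball, Fintype.card_fin]
    rw [ENNReal.ofReal_one, one_pow, one_mul, ENNReal.toReal_ofReal (by positivity)]
  have key : ∀ t ∈ Set.Ioi (0:ℝ), P0 N t * (V/(2*t)) =
      (Real.pi ^ (-(N:ℝ)/2) * V / 2) *
        ((4:ℝ) ^ (-t) * Real.Gamma (((N:ℝ) - 2*t)/2) / Real.Gamma (t+1)) := by
    intro t ht
    have h1 : Real.Gamma (t+1) = t * Real.Gamma t := Real.Gamma_add_one (ne_of_gt ht)
    have hΓt : (0:ℝ) < Real.Gamma t := Real.Gamma_pos_of_pos ht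
    rw [P0, h1]
    field_simp
  have c4 : ContinuousAt (fun t : ℝ => (4:ℝ) ^ (-t)) 0 := by
    have : (fun t : ℝ => (4:ℝ) ^ (-t)) = fun t => Real.exp (Real.log 4 * (-t)) := by
      funext t; rw [Real.rpow_def_of_pos (by norm_num)]
    rw [this]
    fun_prop
  have cΓ1 : ContinuousAt (fun t : ℝ => Real.Gamma (((N:ℝ) - 2*t)/2)) 0 := by
    have hg : ContinuousAt Real.Gamma (((N:ℝ) - 2*0)/2) := by
      refine (Real.differentiableAt_Gamma (fun m => ?_)).continuousAt
      simp only [mul_zero, sub_zero]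
      intro h
      have : (0:ℝ) < (N:ℝ)/2 := by positivity
      rw [h] at this
      have : (0:ℝ) ≤ (m:ℝ) := Nat.cast_nonneg m
      linarith
    have hin : ContinuousAt (fun t : ℝ => ((N:ℝ) - 2*t)/2) 0 :=
      ((continuous_const.sub (continuous_const.mul continuous_id)).div_const 2).continuousAt
    exact ContinuousAt.comp (g := Real.Gamma) (f := fun t : ℝ => ((N:ℝ)-2*t)/2) (x := (0:ℝ)) hg hin
  have cΓ2 : ContinuousAt (fun t : ℝ => Real.Gamma (t+1)) 0 := by
    have hg : ContinuousAt Real.Gamma ((0:ℝ)+1) := by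
      refine (Real.differentiableAt_Gamma (fun m => ?_)).continuousAt
      intro h
      rw [zero_add] at h
      have hm : (0:ℝ) ≤ (m:ℝ) := Nat.cast_nonneg m
      linarith
    have hin : ContinuousAt (fun t : ℝ => t + 1) 0 :=
      (continuous_id.add continuous_const).continuousAt
    exact ContinuousAt.comp (g := Real.Gamma) (f := fun t : ℝ => t+1) (x := (0:ℝ)) hg hin
  have hΓ1 : Real.Gamma ((0:ℝ)+1) = 1 := by rw [zero_add, Real.Gamma_one]
  have hlim : Tendsto (fun t : ℝ => (Real.pi ^ (-(N:ℝ)/2) * V / 2) *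
      ((4:ℝ) ^ (-t) * Real.Gamma (((N:ℝ) - 2*t)/2) / Real.Gamma (t+1)))
      (nhds 0) (nhds ((Real.pi ^ (-(N:ℝ)/2) * V / 2) *
      ((4:ℝ) ^ (-(0:ℝ)) * Real.Gamma (((N:ℝ) - 2*0)/2) / Real.Gamma ((0:ℝ)+1)))) := by
    exact tendsto_const_nhds.mul (((c4.mul cΓ1).div cΓ2 (by rw [hΓ1]; norm_num)))
  have hval : (Real.pi ^ (-(N:ℝ)/2) * V / 2) *
      ((4:ℝ) ^ (-(0:ℝ)) * Real.Gamma (((N:ℝ) - 2*0)/2) / Real.Gamma ((0:ℝ)+1)) = 1 := by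
    rw [hΓ1, neg_zero, Real.rpow_zero, mul_zero, sub_zero]
    have hsq : Real.sqrt Real.pi ^ N = Real.pi ^ ((N:ℝ)/2) := by
      rw [Real.sqrt_eq_rpow, ← Real.rpow_natCast (Real.pi ^ ((1:ℝ)/2)) N,
        ← Real.rpow_mul Real.pi_pos.le]
      push_cast
      ring_nf
    have hab : Real.pi ^ (-(N:ℝ)/2) * Real.pi ^ ((N:ℝ)/2) = 1 := by
      rw [← Real.rpow_add Real.pi_pos, ← add_div, neg_add_cancel, zero_div,
        Real.rpow_zero]
    have hΓadd : Real.Gamma ((N:ℝ)/2 + 1) = ((N:ℝ)/2) * Real.Gamma ((N:ℝ)/2) :=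
      Real.Gamma_add_one (by positivity)
    rw [hVval, hsq, hΓadd]
    field_simp
    have hab' : Real.pi ^ (-((N:ℝ)/2)) * Real.pi ^ ((N:ℝ)/2) = 1 := by rw [← neg_div]; exact hab
    linear_combination hab'
  rw [hval] at hlim
  refine Tendsto.congr' ?_ (hlim.mono_left nhdsWithin_le_nhds)
  filter_upwards [self_mem_nhdsWithin] with t ht
  exact (key t ht).symm

end Aux

theorem stmt7 (N : ℕ) (hN : 1 ≤ N) (φ : EuclideanSpace ℝ (Fin N) → ℝ)
    (hφc : Continuous φ) (hφs : HasCompactSupport φ) :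
    Tendsto (fun t : ℝ => ∫ x : EuclideanSpace ℝ (Fin N),
        P0 N t * ‖x‖ ^ (2*t - (N : ℝ)) * φ x)
      (nhdsWithin 0 (Set.Ioi 0)) (nhds (φ 0)) := by
  haveI : Nonempty (Fin N) := Fin.pos_iff_nonempty.1 hN
  have hN1 : (1:ℝ) ≤ (N:ℝ) := by exact_mod_cast hN
  set V : ℝ := (N:ℝ) * (volume (Metric.ball (0:EuclideanSpace ℝ (Fin N)) 1)).toReal with hV
  rw [Metric.tendsto_nhds]
  intro ε hε
  obtain ⟨M, hM⟩ := hφs.exists_bound_of_continuous hφc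
  have hM0 : 0 ≤ M := le_trans (norm_nonneg (φ 0)) (hM 0)
  obtain ⟨δ, hδpos, hδ⟩ := Metric.continuousAt_iff.1 (hφc.continuousAt (x := (0 : EuclideanSpace ℝ (Fin N)))) (ε/4) (by positivity)
  obtain ⟨R₀, hR₀⟩ := hφs.isBounded.subset_ball 0
  set R : ℝ := max R₀ δ with hRdef
  have hδR : δ ≤ R := le_max_right _ _
  have hRpos : 0 < R := lt_of_lt_of_le hδpos hδR
  have hsupp : ∀ x : EuclideanSpace ℝ (Fin N), x ∉ Metric.ball 0 R → φ x = 0 := by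
    intro x hx
    by_contra h
    exact hx (Metric.ball_subset_ball (le_max_left _ _) (hR₀ (subset_tsupport φ h)))
  have hA : Tendsto (fun t : ℝ => P0 N t * (V / (2*t))) (nhdsWithin 0 (Set.Ioi 0)) (nhds 1) :=
    tendsto_A N hN
  have hrp : ∀ c : ℝ, 0 < c → Tendsto (fun t : ℝ => c ^ (2*t))
      (nhdsWithin 0 (Set.Ioi 0)) (nhds 1) := by
    intro c hc
    have h1 : (fun t : ℝ => c ^ (2*t)) = fun t => Real.exp (Real.log c * (2*t)) := by
      funext t; rw [Real.rpow_def_of_pos hc]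
    have h2 : Tendsto (fun t : ℝ => Real.exp (Real.log c * (2*t))) (nhds 0)
        (nhds (Real.exp (Real.log c * (2*0)))) :=
      (Real.continuous_exp.comp
        (continuous_const.mul (continuous_const.mul continuous_id))).continuousAt
    rw [h1]
    have h3 : Tendsto (fun t : ℝ => Real.exp (Real.log c * (2*t))) (nhdsWithin 0 (Set.Ioi 0))
        (nhds (Real.exp (Real.log c * (2*0)))) := h2.mono_left nhdsWithin_le_nhds
    simpa using h3
  have hB : Tendsto (fun t : ℝ => P0 N t * (V/(2*t)) * δ ^ (2*t))
      (nhdsWithin 0 (Set.Ioi 0)) (nhds 1) := by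
    simpa using hA.mul (hrp δ hδpos)
  have hBR : Tendsto (fun t : ℝ => P0 N t * (V/(2*t)) * R ^ (2*t))
      (nhdsWithin 0 (Set.Ioi 0)) (nhds 1) := by
    simpa using hA.mul (hrp R hRpos)
  set G : ℝ → ℝ := fun t => (ε/4) * (P0 N t * (V/(2*t)) * δ ^ (2*t))
      + |φ 0| * |P0 N t * (V/(2*t)) * δ ^ (2*t) - 1|
      + M * ((P0 N t * (V/(2*t)) * R ^ (2*t)) - (P0 N t * (V/(2*t)) * δ ^ (2*t))) with hG
  have hGlim : Tendsto G (nhdsWithin 0 (Set.Ioi 0))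
      (nhds ((ε/4) * 1 + |φ 0| * |(1:ℝ) - 1| + M * (1 - 1))) := by
    exact ((tendsto_const_nhds.mul hB).add
      (tendsto_const_nhds.mul ((hB.sub tendsto_const_nhds).abs))).add
      (tendsto_const_nhds.mul (hBR.sub hB))
  have hGlt : ∀ᶠ t in nhdsWithin (0:ℝ) (Set.Ioi 0), G t < ε := by
    have hval : (ε/4) * 1 + |φ 0| * |(1:ℝ) - 1| + M * (1 - 1) = ε/4 := by
      simp
    rw [hval] at hGlim
    exact hGlim.eventually_lt_const (by linarith)
  have hbound : ∀ᶠ t in nhdsWithin (0:ℝ) (Set.Ioi 0),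
      dist (∫ x : EuclideanSpace ℝ (Fin N), P0 N t * ‖x‖ ^ (2*t - (N:ℝ)) * φ x) (φ 0)
        ≤ G t := by
    filter_upwards [Ioo_mem_nhdsGT_of_mem
      (show (0:ℝ) ∈ Set.Ico (0:ℝ) (1/2) by constructor <;> norm_num)] with t ht
    obtain ⟨ht0, ht2⟩ := ht
    have h2t : (0:ℝ) < 2*t := by linarith
    have hP0 : 0 ≤ P0 N t := by
      have h1 : 0 < Real.Gamma t := Real.Gamma_pos_of_pos ht0
      have h2 : 0 < Real.Gamma (((N:ℝ) - 2*t)/2) :=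
        Real.Gamma_pos_of_pos (by apply div_pos; linarith; norm_num)
      rw [P0]
      positivity
    have hIR : IntegrableOn (fun x : EuclideanSpace ℝ (Fin N) => ‖x‖ ^ (2*t - (N:ℝ)))
        (Metric.ball 0 R) volume := kernel_integrableOn N hN ht0
    have hIδ : IntegrableOn (fun x : EuclideanSpace ℝ (Fin N) => ‖x‖ ^ (2*t - (N:ℝ)))
        (Metric.ball 0 δ) volume := hIR.mono_set (Metric.ball_subset_ball hδR)
    have hVRval := kernel_integral N hN ht0 hRpos
    have hVδval := kernel_integral N hN ht0 hδpos
    rw [← hV] at hVRval hVδval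
    have hmeasK : AEStronglyMeasurable (fun x : EuclideanSpace ℝ (Fin N) => ‖x‖ ^ (2*t - (N:ℝ)))
        volume :=
      (by measurability :
        Measurable fun x : EuclideanSpace ℝ (Fin N) => ‖x‖ ^ (2*t - (N:ℝ))).aestronglyMeasurable
    have hrnn : ∀ x : EuclideanSpace ℝ (Fin N), 0 ≤ ‖x‖ ^ (2*t - (N:ℝ)) :=
      fun x => Real.rpow_nonneg (norm_nonneg x) _
    have habs : ∀ x : EuclideanSpace ℝ (Fin N), |‖x‖ ^ (2*t - (N:ℝ))| = ‖x‖ ^ (2*t - (N:ℝ)) :=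
      fun x => abs_of_nonneg (hrnn x)
    have hKφR : IntegrableOn (fun x : EuclideanSpace ℝ (Fin N) => ‖x‖ ^ (2*t - (N:ℝ)) * φ x)
        (Metric.ball 0 R) volume := by
      refine Integrable.mono' (hIR.mul_const M) (hmeasK.mul hφc.aestronglyMeasurable).restrict
        (ae_of_all _ fun x => ?_)
      rw [Real.norm_eq_abs, abs_mul, habs x]
      exact mul_le_mul_of_nonneg_left (by simpa [Real.norm_eq_abs] using hM x : |φ x| ≤ M) (hrnn x)
    have hKφδ : IntegrableOn (fun x : EuclideanSpace ℝ (Fin N) => ‖x‖ ^ (2*t - (N:ℝ)) * φ x)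
        (Metric.ball 0 δ) volume := hKφR.mono_set (Metric.ball_subset_ball hδR)
    have hw : (∫ x : EuclideanSpace ℝ (Fin N), P0 N t * ‖x‖ ^ (2*t - (N:ℝ)) * φ x)
        = P0 N t * ∫ x in Metric.ball (0:EuclideanSpace ℝ (Fin N)) R,
            ‖x‖ ^ (2*t - (N:ℝ)) * φ x := by
      have e : ∀ x : EuclideanSpace ℝ (Fin N),
          P0 N t * ‖x‖ ^ (2*t - (N:ℝ)) * φ x = P0 N t * (‖x‖ ^ (2*t - (N:ℝ)) * φ x) :=
        fun x => by ring
      rw [integral_congr_ae (ae_of_all _ e), integral_const_mul]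
      congr 1
      exact (setIntegral_eq_integral_of_forall_compl_eq_zero
        (fun x hx => by rw [hsupp x hx, mul_zero])).symm
    have hsplit : (∫ x in Metric.ball (0:EuclideanSpace ℝ (Fin N)) R, ‖x‖ ^ (2*t - (N:ℝ)) * φ x)
        = (∫ x in Metric.ball (0:EuclideanSpace ℝ (Fin N)) δ, ‖x‖ ^ (2*t - (N:ℝ)) * φ x)
          + ∫ x in Metric.ball (0:EuclideanSpace ℝ (Fin N)) R \
              Metric.ball (0:EuclideanSpace ℝ (Fin N)) δ, ‖x‖ ^ (2*t - (N:ℝ)) * φ x := by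
      rw [← integral_inter_add_diff measurableSet_ball hKφR,
        Set.inter_eq_self_of_subset_right (Metric.ball_subset_ball hδR)]
    have hKsplit : (∫ x in Metric.ball (0:EuclideanSpace ℝ (Fin N)) R \
            Metric.ball (0:EuclideanSpace ℝ (Fin N)) δ, ‖x‖ ^ (2*t - (N:ℝ)))
        = (∫ x in Metric.ball (0:EuclideanSpace ℝ (Fin N)) R, ‖x‖ ^ (2*t - (N:ℝ)))
          - ∫ x in Metric.ball (0:EuclideanSpace ℝ (Fin N)) δ, ‖x‖ ^ (2*t - (N:ℝ)) := by
      have h := integral_inter_add_diff (t := Metric.ball (0:EuclideanSpace ℝ (Fin N)) δ)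
        measurableSet_ball hIR
      rw [Set.inter_eq_self_of_subset_right (Metric.ball_subset_ball hδR)] at h
      linarith
    have hsub_int : IntegrableOn
        (fun x : EuclideanSpace ℝ (Fin N) => ‖x‖ ^ (2*t - (N:ℝ)) * (φ x - φ 0))
        (Metric.ball 0 δ) volume := by
      refine (hKφδ.sub (hIδ.mul_const (φ 0))).congr (ae_of_all _ fun x => ?_)
      simp only [Pi.sub_apply]
      ring
    have hT1 : |(∫ x in Metric.ball (0:EuclideanSpace ℝ (Fin N)) δ, ‖x‖ ^ (2*t - (N:ℝ)) * φ x)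
        - φ 0 * ∫ x in Metric.ball (0:EuclideanSpace ℝ (Fin N)) δ, ‖x‖ ^ (2*t - (N:ℝ))|
        ≤ (ε/4) * ∫ x in Metric.ball (0:EuclideanSpace ℝ (Fin N)) δ, ‖x‖ ^ (2*t - (N:ℝ)) := by
      have heq : (∫ x in Metric.ball (0:EuclideanSpace ℝ (Fin N)) δ, ‖x‖ ^ (2*t - (N:ℝ)) * φ x)
          - φ 0 * ∫ x in Metric.ball (0:EuclideanSpace ℝ (Fin N)) δ, ‖x‖ ^ (2*t - (N:ℝ))
          = ∫ x in Metric.ball (0:EuclideanSpace ℝ (Fin N)) δ,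
              ‖x‖ ^ (2*t - (N:ℝ)) * (φ x - φ 0) := by
        rw [mul_comm (φ 0), ← integral_mul_const, ← integral_sub hKφδ (hIδ.mul_const (φ 0))]
        exact integral_congr_ae (ae_of_all _ fun x => by ring)
      rw [heq]
      have hb : ∀ x ∈ Metric.ball (0:EuclideanSpace ℝ (Fin N)) δ,
          |‖x‖ ^ (2*t - (N:ℝ)) * (φ x - φ 0)| ≤ ‖x‖ ^ (2*t - (N:ℝ)) * (ε/4) := by
        intro x hx
        rw [abs_mul, habs x]
        refine mul_le_mul_of_nonneg_left ?_ (hrnn x)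
        have h := hδ (show dist x 0 < δ from Metric.mem_ball.1 hx)
        rw [Real.dist_eq] at h
        exact h.le
      calc |∫ x in Metric.ball (0:EuclideanSpace ℝ (Fin N)) δ,
              ‖x‖ ^ (2*t - (N:ℝ)) * (φ x - φ 0)|
          ≤ ∫ x in Metric.ball (0:EuclideanSpace ℝ (Fin N)) δ,
              |‖x‖ ^ (2*t - (N:ℝ)) * (φ x - φ 0)| := by
            have h := norm_integral_le_integral_norm
              (f := fun x : EuclideanSpace ℝ (Fin N) => ‖x‖ ^ (2*t - (N:ℝ)) * (φ x - φ 0))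
              (μ := volume.restrict (Metric.ball (0:EuclideanSpace ℝ (Fin N)) δ))
            simp only [Real.norm_eq_abs] at h
            exact h
        _ ≤ ∫ x in Metric.ball (0:EuclideanSpace ℝ (Fin N)) δ,
              ‖x‖ ^ (2*t - (N:ℝ)) * (ε/4) :=
            setIntegral_mono_on hsub_int.abs (hIδ.mul_const _) measurableSet_ball hb
        _ = (ε/4) * ∫ x in Metric.ball (0:EuclideanSpace ℝ (Fin N)) δ, ‖x‖ ^ (2*t - (N:ℝ)) := by
            rw [integral_mul_const]; ring
    have hT2 : |∫ x in Metric.ball (0:EuclideanSpace ℝ (Fin N)) R \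
            Metric.ball (0:EuclideanSpace ℝ (Fin N)) δ, ‖x‖ ^ (2*t - (N:ℝ)) * φ x|
        ≤ M * ((∫ x in Metric.ball (0:EuclideanSpace ℝ (Fin N)) R, ‖x‖ ^ (2*t - (N:ℝ)))
            - ∫ x in Metric.ball (0:EuclideanSpace ℝ (Fin N)) δ, ‖x‖ ^ (2*t - (N:ℝ))) := by
      rw [← hKsplit]
      have hmeasD : MeasurableSet (Metric.ball (0:EuclideanSpace ℝ (Fin N)) R \
          Metric.ball (0:EuclideanSpace ℝ (Fin N)) δ) :=
        measurableSet_ball.diff measurableSet_ball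
      have hKφD := hKφR.mono_set
        (Set.diff_subset (s := Metric.ball (0:EuclideanSpace ℝ (Fin N)) R)
          (t := Metric.ball (0:EuclideanSpace ℝ (Fin N)) δ))
      have hKD := hIR.mono_set
        (Set.diff_subset (s := Metric.ball (0:EuclideanSpace ℝ (Fin N)) R)
          (t := Metric.ball (0:EuclideanSpace ℝ (Fin N)) δ))
      calc |∫ x in Metric.ball (0:EuclideanSpace ℝ (Fin N)) R \
              Metric.ball (0:EuclideanSpace ℝ (Fin N)) δ, ‖x‖ ^ (2*t - (N:ℝ)) * φ x|
          ≤ ∫ x in Metric.ball (0:EuclideanSpace ℝ (Fin N)) R \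
              Metric.ball (0:EuclideanSpace ℝ (Fin N)) δ, |‖x‖ ^ (2*t - (N:ℝ)) * φ x| := by
            have h := norm_integral_le_integral_norm
              (f := fun x : EuclideanSpace ℝ (Fin N) => ‖x‖ ^ (2*t - (N:ℝ)) * φ x)
              (μ := volume.restrict (Metric.ball (0:EuclideanSpace ℝ (Fin N)) R \
                Metric.ball (0:EuclideanSpace ℝ (Fin N)) δ))
            simp only [Real.norm_eq_abs] at h
            exact h
        _ ≤ ∫ x in Metric.ball (0:EuclideanSpace ℝ (Fin N)) R \
              Metric.ball (0:EuclideanSpace ℝ (Fin N)) δ, ‖x‖ ^ (2*t - (N:ℝ)) * M := by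
            refine setIntegral_mono_on hKφD.abs (hKD.mul_const M) hmeasD (fun x hx => ?_)
            rw [abs_mul, habs x]
            exact mul_le_mul_of_nonneg_left
              (by simpa [Real.norm_eq_abs] using hM x : |φ x| ≤ M) (hrnn x)
        _ = M * ∫ x in Metric.ball (0:EuclideanSpace ℝ (Fin N)) R \
              Metric.ball (0:EuclideanSpace ℝ (Fin N)) δ, ‖x‖ ^ (2*t - (N:ℝ)) := by
            rw [integral_mul_const]; ring
    rw [Real.dist_eq, hw, hsplit]
    have key : P0 N t * ((∫ x in Metric.ball (0:EuclideanSpace ℝ (Fin N)) δ,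
            ‖x‖ ^ (2*t - (N:ℝ)) * φ x)
          + ∫ x in Metric.ball (0:EuclideanSpace ℝ (Fin N)) R \
              Metric.ball (0:EuclideanSpace ℝ (Fin N)) δ, ‖x‖ ^ (2*t - (N:ℝ)) * φ x) - φ 0
        = P0 N t * ((∫ x in Metric.ball (0:EuclideanSpace ℝ (Fin N)) δ,
              ‖x‖ ^ (2*t - (N:ℝ)) * φ x)
            - φ 0 * ∫ x in Metric.ball (0:EuclideanSpace ℝ (Fin N)) δ, ‖x‖ ^ (2*t - (N:ℝ)))
          + φ 0 * (P0 N t * (∫ x in Metric.ball (0:EuclideanSpace ℝ (Fin N)) δ,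
              ‖x‖ ^ (2*t - (N:ℝ))) - 1)
          + P0 N t * ∫ x in Metric.ball (0:EuclideanSpace ℝ (Fin N)) R \
              Metric.ball (0:EuclideanSpace ℝ (Fin N)) δ, ‖x‖ ^ (2*t - (N:ℝ)) * φ x := by
      ring
    rw [key]
    have habs3 := abs_add_le
      (P0 N t * ((∫ x in Metric.ball (0:EuclideanSpace ℝ (Fin N)) δ,
          ‖x‖ ^ (2*t - (N:ℝ)) * φ x)
        - φ 0 * ∫ x in Metric.ball (0:EuclideanSpace ℝ (Fin N)) δ, ‖x‖ ^ (2*t - (N:ℝ)))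
        + φ 0 * (P0 N t * (∫ x in Metric.ball (0:EuclideanSpace ℝ (Fin N)) δ,
          ‖x‖ ^ (2*t - (N:ℝ))) - 1))
      (P0 N t * ∫ x in Metric.ball (0:EuclideanSpace ℝ (Fin N)) R \
          Metric.ball (0:EuclideanSpace ℝ (Fin N)) δ, ‖x‖ ^ (2*t - (N:ℝ)) * φ x)
    refine le_trans habs3 ?_
    refine le_trans (add_le_add_left (abs_add_le _ _) _) ?_
    rw [hG]
    simp only [abs_mul, abs_of_nonneg hP0]
    have c1 : P0 N t * |(∫ x in Metric.ball (0:EuclideanSpace ℝ (Fin N)) δ,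
          ‖x‖ ^ (2*t - (N:ℝ)) * φ x)
        - φ 0 * ∫ x in Metric.ball (0:EuclideanSpace ℝ (Fin N)) δ, ‖x‖ ^ (2*t - (N:ℝ))|
        ≤ P0 N t * ((ε/4) * (V * (δ ^ (2*t) / (2*t)))) := by
      rw [← hVδval]
      exact mul_le_mul_of_nonneg_left hT1 hP0
    have c2 : |φ 0| * |P0 N t * (∫ x in Metric.ball (0:EuclideanSpace ℝ (Fin N)) δ,
          ‖x‖ ^ (2*t - (N:ℝ))) - 1|
        = |φ 0| * |P0 N t * (V * (δ ^ (2*t) / (2*t))) - 1| := by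
      rw [hVδval]
    have c3 : P0 N t * |∫ x in Metric.ball (0:EuclideanSpace ℝ (Fin N)) R \
            Metric.ball (0:EuclideanSpace ℝ (Fin N)) δ, ‖x‖ ^ (2*t - (N:ℝ)) * φ x|
        ≤ P0 N t * (M * (V * (R ^ (2*t) / (2*t)) - V * (δ ^ (2*t) / (2*t)))) := by
      rw [← hVδval, ← hVRval]
      exact mul_le_mul_of_nonneg_left hT2 hP0
    calc P0 N t * |(∫ x in Metric.ball (0:EuclideanSpace ℝ (Fin N)) δ,
            ‖x‖ ^ (2*t - (N:ℝ)) * φ x)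
          - φ 0 * ∫ x in Metric.ball (0:EuclideanSpace ℝ (Fin N)) δ, ‖x‖ ^ (2*t - (N:ℝ))|
        + |φ 0| * |P0 N t * (∫ x in Metric.ball (0:EuclideanSpace ℝ (Fin N)) δ,
            ‖x‖ ^ (2*t - (N:ℝ))) - 1|
        + P0 N t * |∫ x in Metric.ball (0:EuclideanSpace ℝ (Fin N)) R \
            Metric.ball (0:EuclideanSpace ℝ (Fin N)) δ, ‖x‖ ^ (2*t - (N:ℝ)) * φ x|
        ≤ P0 N t * ((ε/4) * (V * (δ ^ (2*t) / (2*t))))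
          + |φ 0| * |P0 N t * (V * (δ ^ (2*t) / (2*t))) - 1|
          + P0 N t * (M * (V * (R ^ (2*t) / (2*t)) - V * (δ ^ (2*t) / (2*t)))) := by
          rw [c2]; exact add_le_add (add_le_add c1 le_rfl) c3
      _ = G t := by
          rw [hG]
          have eB : P0 N t * (V * (δ ^ (2*t) / (2*t))) = P0 N t * (V/(2*t)) * δ ^ (2*t) := by
            ring
          rw [eB]
          ring
  filter_upwards [hbound, hGlt] with t h1 h2
  exact lt_of_le_of_lt h1 h2
end

section
/- Let u* (x) = ∫_0^1 P_0(t) |x|^{2t-N} dt where P_0(t) = π^{-N/2} 4^{-t} Γ((N-2t)/2)/Γ(t), for N ≥ 3. Then there is a constant c > 0 such that for all x with 0 < |x| < 1/e, |u*(x) - (Γ(N/2)/(4π^{N/2})) |x|^{-N}/(ln|x|)²| ≤ c |x|^{-N}/|ln|x||³. -/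
open MeasureTheory

noncomputable def uStar (N : ℕ) (x : EuclideanSpace ℝ (Fin N)) : ℝ :=
  ∫ t in Set.Ioc (0 : ℝ) 1, P0 N t * ‖x‖ ^ (2*t - (N : ℝ))

open Set

lemma contDiffAt_realGamma {x : ℝ} (hx : 0 < x) : ContDiffAt ℝ 1 Real.Gamma x := by
  have hU : IsOpen {s : ℂ | 0 < s.re} := isOpen_lt continuous_const Complex.continuous_re
  have hmem : (x : ℂ) ∈ {s : ℂ | 0 < s.re} := by simpa using hx
  have hdiff : DifferentiableOn ℂ Complex.Gamma {s : ℂ | 0 < s.re} := by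
    intro s hs
    refine (Complex.differentiableAt_Gamma s fun m => ?_).differentiableWithinAt
    intro h
    rw [h] at hs
    simp only [Set.mem_setOf_eq, Complex.neg_re, Complex.natCast_re] at hs
    have : (0:ℝ) ≤ m := m.cast_nonneg
    linarith
  have hA : AnalyticAt ℂ Complex.Gamma (x : ℂ) := hdiff.analyticAt (hU.mem_nhds hmem)
  have h1 : ContDiffAt ℝ 1 (fun y : ℝ => Complex.Gamma (y : ℂ)) x := by
    have h0 : ContDiffAt ℂ 1 Complex.Gamma (x : ℂ) := hA.contDiffAt
    exact (h0.restrict_scalars ℝ).comp x Complex.ofRealCLM.contDiff.contDiffAt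
  have h2 : ContDiffAt ℝ 1 (fun y : ℝ => (Complex.Gamma (y:ℂ)).re) x :=
    Complex.reCLM.contDiff.contDiffAt.comp x h1
  refine h2.congr_of_eventuallyEq ?_
  filter_upwards with y
  rw [Complex.Gamma_ofReal, Complex.ofReal_re]

noncomputable def phiAux (N : ℕ) (t : ℝ) : ℝ :=
  Real.pi ^ (-(N : ℝ)/2) * (4 : ℝ) ^ (-t) * Real.Gamma (((N : ℝ) - 2*t)/2) / Real.Gamma (t+1)

lemma phi_contDiffOn (N : ℕ) (hN : 3 ≤ N) :
    ContDiffOn ℝ 1 (phiAux N) (Ioo (-(1:ℝ)/2) (5/4)) := by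
  intro t ht
  obtain ⟨ht1, ht2⟩ := ht
  have hN3 : (3:ℝ) ≤ (N:ℝ) := by exact_mod_cast hN
  have c1 : ContDiffAt ℝ 1 (fun t : ℝ => (4:ℝ) ^ (-t)) t := by
    have : (fun t : ℝ => (4:ℝ) ^ (-t)) = fun t => Real.exp (Real.log 4 * (-t)) := by
      funext s; rw [Real.rpow_def_of_pos (by norm_num)]
    rw [this]
    exact (Real.contDiff_exp.comp (contDiff_const.mul contDiff_id.neg)).contDiffAt
  have c2 : ContDiffAt ℝ 1 (fun t : ℝ => Real.Gamma (((N : ℝ) - 2*t)/2)) t := by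
    have harg : 0 < ((N : ℝ) - 2*t)/2 := by linarith
    exact (contDiffAt_realGamma harg).comp (f := fun t : ℝ => ((N : ℝ) - 2*t)/2) t
      (((contDiff_const.sub (contDiff_const.mul contDiff_id)).div_const 2).contDiffAt)
  have c3 : ContDiffAt ℝ 1 (fun t : ℝ => Real.Gamma (t+1)) t := by
    have : (0:ℝ) < t + 1 := by linarith
    exact (contDiffAt_realGamma this).comp (f := fun t : ℝ => t + 1) t ((contDiff_id.add contDiff_const).contDiffAt)
  have hne : Real.Gamma (t+1) ≠ 0 := (Real.Gamma_pos_of_pos (by linarith)).ne'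
  exact (((contDiffAt_const.mul c1).mul c2).div c3 hne).contDiffWithinAt

lemma phi_bound (N : ℕ) (hN : 3 ≤ N) :
    ∃ K : ℝ, 0 ≤ K ∧ ∀ t ∈ Icc (0:ℝ) 1, |phiAux N t - phiAux N 0| ≤ K * t := by
  have hU : IsOpen (Ioo (-(1:ℝ)/2) (5/4)) := isOpen_Ioo
  have hsub : Icc (0:ℝ) 1 ⊆ Ioo (-(1:ℝ)/2) (5/4) := fun x hx => ⟨by linarith [hx.1], by linarith [hx.2]⟩
  have hcd := phi_contDiffOn N hN
  have hderiv_cont : ContinuousOn (deriv (phiAux N)) (Ioo (-(1:ℝ)/2) (5/4)) :=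
    hcd.continuousOn_deriv_of_isOpen hU le_rfl
  obtain ⟨K, hK⟩ := isCompact_Icc.exists_bound_of_continuousOn (hderiv_cont.mono hsub)
  have hK0 : 0 ≤ K := le_trans (norm_nonneg _) (hK 0 ⟨le_rfl, zero_le_one⟩)
  refine ⟨K, hK0, fun t ht => ?_⟩
  have hdiff : ∀ x ∈ Icc (0:ℝ) 1, HasDerivWithinAt (phiAux N) (deriv (phiAux N) x) (Icc (0:ℝ) 1) x := by
    intro x hx
    have : DifferentiableAt ℝ (phiAux N) x :=
      (hcd.contDiffAt (hU.mem_nhds (hsub hx))).differentiableAt one_ne_zero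
    exact this.hasDerivAt.hasDerivWithinAt
  have := Convex.norm_image_sub_le_of_norm_hasDerivWithin_le hdiff hK (convex_Icc 0 1)
    ⟨le_rfl, zero_le_one⟩ ht
  simpa [Real.norm_eq_abs, abs_of_nonneg ht.1] using this

lemma integrable_pow_exp (n : ℕ) {b : ℝ} (hb : 0 < b) :
    IntegrableOn (fun t : ℝ => t ^ n * Real.exp (-(b*t))) (Ioi 0) := by
  have h := integrableOn_rpow_mul_exp_neg_mul_rpow (s := (n:ℝ)) (p := 1) (b := b)
    (lt_of_lt_of_le neg_one_lt_zero n.cast_nonneg) zero_lt_one hb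
  refine h.congr_fun (fun x hx => ?_) measurableSet_Ioi
  beta_reduce
  rw [Real.rpow_one, Real.rpow_natCast, neg_mul]

lemma integrable_t_exp {b : ℝ} (hb : 0 < b) :
    IntegrableOn (fun t : ℝ => t * Real.exp (-(b*t))) (Ioi 0) := by
  have h := integrable_pow_exp 1 hb
  simpa using h

lemma integral_t_exp {b : ℝ} (hb : 0 < b) :
    ∫ t in Ioi (0:ℝ), t * Real.exp (-(b*t)) = 1 / b^2 := by
  have h := Real.integral_rpow_mul_exp_neg_mul_Ioi (a := 2) (r := b) (by norm_num) hb
  rw [show (2:ℝ) - 1 = 1 by norm_num] at h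
  simp only [Real.rpow_one] at h
  rw [h, Real.Gamma_two, mul_one, show ((2:ℝ)) = ((2:ℕ):ℝ) by norm_num, Real.rpow_natCast,
    div_pow, one_pow]

lemma integral_t2_exp {b : ℝ} (hb : 0 < b) :
    ∫ t in Ioi (0:ℝ), t^2 * Real.exp (-(b*t)) = 2 / b^3 := by
  have h := Real.integral_rpow_mul_exp_neg_mul_Ioi (a := 3) (r := b) (by norm_num) hb
  rw [show (3:ℝ) - 1 = 2 by norm_num] at h
  have e1 : ∀ t : ℝ, t ∈ Ioi (0:ℝ) → t ^ (2:ℝ) * Real.exp (-(b*t)) = t^2 * Real.exp (-(b*t)) := by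
    intro t ht
    rw [show (2:ℝ) = ((2:ℕ):ℝ) by norm_num, Real.rpow_natCast]
  rw [setIntegral_congr_fun measurableSet_Ioi e1] at h
  rw [h, show Real.Gamma 3 = 2 by
      rw [show (3:ℝ) = ((2:ℕ):ℝ)+1 by norm_num, Real.Gamma_nat_eq_factorial]; norm_num,
    show ((3:ℝ)) = ((3:ℕ):ℝ) by norm_num, Real.rpow_natCast, div_pow, one_pow]
  ring

theorem stmt12 (N : ℕ) (hN : 3 ≤ N) :
    ∃ c : ℝ, 0 < c ∧ ∀ x : EuclideanSpace ℝ (Fin N), 0 < ‖x‖ → ‖x‖ < (Real.exp 1)⁻¹ →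
      |uStar N x - (Real.Gamma ((N : ℝ)/2) / (4 * Real.pi ^ ((N : ℝ)/2))) *
          (‖x‖ ^ (-(N : ℝ)) / (Real.log ‖x‖)^2)|
        ≤ c * ‖x‖ ^ (-(N : ℝ)) / |Real.log ‖x‖|^3 := by
  classical
  have hN3 : (3:ℝ) ≤ (N:ℝ) := by exact_mod_cast hN
  obtain ⟨K, hK0, hK⟩ := phi_bound N hN
  set φ0 : ℝ := phiAux N 0 with hφ0def
  have hφ0 : φ0 = Real.pi ^ (-(N : ℝ)/2) * Real.Gamma ((N:ℝ)/2) := by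
    rw [hφ0def, phiAux]
    simp [Real.Gamma_one]
  have hφ0pos : 0 < φ0 := by
    rw [hφ0]
    have := Real.Gamma_pos_of_pos (show (0:ℝ) < (N:ℝ)/2 by linarith)
    positivity
  have hCst : Real.Gamma ((N : ℝ)/2) / (4 * Real.pi ^ ((N : ℝ)/2)) = φ0 / 4 := by
    have hπ : (0:ℝ) < Real.pi ^ ((N:ℝ)/2) := Real.rpow_pos_of_pos Real.pi_pos _
    rw [hφ0, show -(N:ℝ)/2 = -((N:ℝ)/2) by ring, Real.rpow_neg Real.pi_pos.le,
      div_eq_div_iff (by positivity) (by norm_num : (4:ℝ) ≠ 0)]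
    field_simp
  refine ⟨(K + φ0)/4, by positivity, fun x hx0 hx1 => ?_⟩
  set r : ℝ := ‖x‖ with hrdef
  have hlogr : Real.log r < -1 := by
    have := Real.log_lt_log hx0 hx1
    rwa [Real.log_inv, Real.log_exp] at this
  set L : ℝ := -Real.log r with hLdef
  have hL1 : 1 < L := by simp only [hLdef]; linarith
  have hL0 : 0 < L := by linarith
  set b : ℝ := 2*L with hbdef
  have hb : 0 < b := by positivity
  set E : ℝ → ℝ := fun t => Real.exp (-(b*t)) with hEdef
  -- pointwise rewrite of the integrand
  have hpow : ∀ t : ℝ, r ^ (2*t - (N:ℝ)) = E t * r ^ (-(N:ℝ)) := by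
    intro t
    rw [show 2*t - (N:ℝ) = 2*t + (-(N:ℝ)) by ring, Real.rpow_add hx0]
    congr 1
    rw [Real.rpow_def_of_pos hx0, hEdef]
    congr 1
    simp only [hbdef, hLdef]; ring
  -- phi facts
  have hphicont : ContinuousOn (phiAux N) (Icc (0:ℝ) 1) :=
    ((phi_contDiffOn N hN).continuousOn).mono
      (fun x hx => ⟨by linarith [hx.1], by linarith [hx.2]⟩)
  have hP0eq : ∀ t ∈ Ioc (0:ℝ) 1, P0 N t = t * phiAux N t := by
    intro t ht
    have ht0 : (0:ℝ) < t := ht.1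
    have hΓ : Real.Gamma (t+1) = t * Real.Gamma t := Real.Gamma_add_one ht0.ne'
    have hΓt : Real.Gamma t ≠ 0 := (Real.Gamma_pos_of_pos ht0).ne'
    rw [P0, phiAux, hΓ]
    field_simp
  -- integrability facts
  have h_tE : IntegrableOn (fun t : ℝ => t * E t) (Ioi 0) := integrable_t_exp hb
  have h_t2E : IntegrableOn (fun t : ℝ => t^2 * E t) (Ioi 0) := integrable_pow_exp 2 hb
  have h_phiE : IntegrableOn (fun t : ℝ => t * phiAux N t * E t) (Icc (0:ℝ) 1) := by
    apply ContinuousOn.integrableOn_compact isCompact_Icc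
    exact (continuousOn_id.mul hphicont).mul
      ((Real.continuous_exp.comp ((continuous_const.mul continuous_id).neg)).continuousOn)
  have h_P0E : IntegrableOn (fun t : ℝ => P0 N t * E t) (Ioc (0:ℝ) 1) := by
    refine (h_phiE.mono_set Ioc_subset_Icc_self).congr_fun (fun t ht => ?_) measurableSet_Ioc
    rw [hP0eq t ht]
  have h_tE' : IntegrableOn (fun t : ℝ => t * E t) (Ioc (0:ℝ) 1) :=
    h_tE.mono_set Ioc_subset_Ioi_self
  have h_gE : IntegrableOn (fun t : ℝ => (P0 N t - φ0 * t) * E t) (Ioc (0:ℝ) 1) := by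
    have h' : IntegrableOn (fun t : ℝ => P0 N t * E t - φ0 * (t * E t)) (Ioc (0:ℝ) 1) :=
      h_P0E.sub (h_tE'.const_mul φ0)
    refine h'.congr_fun (fun t ht => ?_) measurableSet_Ioc
    ring
  -- splitting the integral of t * E t
  have hsplit : ∫ t in Ioi (0:ℝ), t * E t
      = (∫ t in Ioc (0:ℝ) 1, t * E t) + ∫ t in Ioi (1:ℝ), t * E t := by
    rw [← setIntegral_union (Ioc_disjoint_Ioi le_rfl) measurableSet_Ioi h_tE'
      (h_tE.mono_set (Ioi_subset_Ioi zero_le_one)), Ioc_union_Ioi_eq_Ioi zero_le_one]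
  set T : ℝ := ∫ t in Ioi (1:ℝ), t * E t with hTdef
  have hT0 : 0 ≤ T := by
    apply setIntegral_nonneg measurableSet_Ioi
    intro t ht
    have : (0:ℝ) < t := lt_trans zero_lt_one ht
    positivity
  have hT : T ≤ 2/b^3 := by
    have step1 : T ≤ ∫ t in Ioi (1:ℝ), t^2 * E t := by
      apply setIntegral_mono_on (h_tE.mono_set (Ioi_subset_Ioi zero_le_one))
        (h_t2E.mono_set (Ioi_subset_Ioi zero_le_one)) measurableSet_Ioi
      intro t ht
      have h1t : (1:ℝ) ≤ t := le_of_lt ht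
      have : t ≤ t^2 := by nlinarith
      exact mul_le_mul_of_nonneg_right this (Real.exp_nonneg _)
    have step2 : ∫ t in Ioi (1:ℝ), t^2 * E t ≤ ∫ t in Ioi (0:ℝ), t^2 * E t := by
      apply setIntegral_mono_set h_t2E
      · filter_upwards [self_mem_ae_restrict measurableSet_Ioi] with t ht
        have : (0:ℝ) < t := ht
        positivity
      · exact HasSubset.Subset.eventuallyLE (Ioi_subset_Ioi zero_le_one)
    calc T ≤ ∫ t in Ioi (1:ℝ), t^2 * E t := step1
      _ ≤ ∫ t in Ioi (0:ℝ), t^2 * E t := step2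
      _ = 2/b^3 := integral_t2_exp hb
  -- main error term
  have h_t2E' : IntegrableOn (fun t : ℝ => K * (t^2 * E t)) (Ioc (0:ℝ) 1) :=
    (h_t2E.mono_set Ioc_subset_Ioi_self).const_mul K
  have hMain : |∫ t in Ioc (0:ℝ) 1, (P0 N t - φ0 * t) * E t| ≤ K * (2/b^3) := by
    have h1 : |∫ t in Ioc (0:ℝ) 1, (P0 N t - φ0 * t) * E t|
        ≤ ∫ t in Ioc (0:ℝ) 1, |P0 N t - φ0 * t| * |E t| := by
      simpa [Real.norm_eq_abs] using
        norm_integral_le_integral_norm (μ := volume.restrict (Ioc (0:ℝ) 1))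
          (fun t => (P0 N t - φ0 * t) * E t)
    have h_gE_abs : IntegrableOn (fun t : ℝ => |P0 N t - φ0 * t| * |E t|) (Ioc (0:ℝ) 1) := by
      have htmp : IntegrableOn (fun t : ℝ => |(P0 N t - φ0 * t) * E t|) (Ioc (0:ℝ) 1) :=
        h_gE.abs
      refine htmp.congr_fun (fun t ht => ?_) measurableSet_Ioc
      exact abs_mul _ _
    have h2 : ∫ t in Ioc (0:ℝ) 1, |P0 N t - φ0 * t| * |E t|
        ≤ ∫ t in Ioc (0:ℝ) 1, K * (t^2 * E t) := by
      apply setIntegral_mono_on h_gE_abs h_t2E' measurableSet_Ioc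
      intro t ht
      have ht0 : (0:ℝ) < t := ht.1
      rw [abs_of_pos (Real.exp_pos _ : (0:ℝ) < E t), hP0eq t ht]
      have : |t * phiAux N t - φ0 * t| ≤ K * t^2 := by
        have h3 : t * phiAux N t - φ0 * t = t * (phiAux N t - φ0) := by ring
        rw [h3, abs_mul, abs_of_pos ht0]
        have h4 := hK t ⟨ht0.le, ht.2⟩
        calc t * |phiAux N t - φ0| ≤ t * (K * t) :=
              mul_le_mul_of_nonneg_left h4 ht0.le
          _ = K * t^2 := by ring
      calc |t * phiAux N t - φ0 * t| * E t ≤ K * t^2 * E t :=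
            mul_le_mul_of_nonneg_right this (Real.exp_nonneg _)
        _ = K * (t^2 * E t) := by ring
    have h3 : ∫ t in Ioc (0:ℝ) 1, K * (t^2 * E t) ≤ K * (2/b^3) := by
      rw [MeasureTheory.integral_const_mul]
      apply mul_le_mul_of_nonneg_left _ hK0
      calc ∫ t in Ioc (0:ℝ) 1, t^2 * E t ≤ ∫ t in Ioi (0:ℝ), t^2 * E t := by
            apply setIntegral_mono_set h_t2E
            · filter_upwards [self_mem_ae_restrict measurableSet_Ioi] with t ht
              have : (0:ℝ) < t := ht
              positivity
            · exact HasSubset.Subset.eventuallyLE Ioc_subset_Ioi_self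
        _ = 2/b^3 := integral_t2_exp hb
    linarith
  -- express A
  set A : ℝ := ∫ t in Ioc (0:ℝ) 1, P0 N t * E t with hAdef
  have hGsplit : ∫ t in Ioc (0:ℝ) 1, (P0 N t - φ0 * t) * E t
      = A - φ0 * ∫ t in Ioc (0:ℝ) 1, t * E t := by
    have : ∀ t : ℝ, (P0 N t - φ0 * t) * E t = P0 N t * E t - φ0 * (t * E t) := by
      intro t; ring
    simp_rw [this]
    rw [integral_sub h_P0E (h_tE'.const_mul φ0), MeasureTheory.integral_const_mul]
  have hI : (∫ t in Ioc (0:ℝ) 1, t * E t) = 1/b^2 - T := by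
    have := hsplit
    rw [integral_t_exp hb] at this
    linarith
  have hAbound : |A - φ0 / b^2| ≤ (2*K + 2*φ0)/b^3 := by
    have hAeq : A - φ0 / b^2
        = (∫ t in Ioc (0:ℝ) 1, (P0 N t - φ0 * t) * E t) - φ0 * T := by
      rw [hGsplit, hI]; field_simp; ring
    rw [hAeq]
    have h1 : |(∫ t in Ioc (0:ℝ) 1, (P0 N t - φ0 * t) * E t) - φ0 * T|
        ≤ |∫ t in Ioc (0:ℝ) 1, (P0 N t - φ0 * t) * E t| + φ0 * T := by
      have := abs_sub (∫ t in Ioc (0:ℝ) 1, (P0 N t - φ0 * t) * E t) (φ0 * T)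
      calc |(∫ t in Ioc (0:ℝ) 1, (P0 N t - φ0 * t) * E t) - φ0 * T|
          ≤ |∫ t in Ioc (0:ℝ) 1, (P0 N t - φ0 * t) * E t| + |φ0 * T| := abs_sub _ _
        _ = _ := by rw [abs_of_nonneg (by positivity : (0:ℝ) ≤ φ0 * T)]
    have h2 : φ0 * T ≤ φ0 * (2/b^3) := mul_le_mul_of_nonneg_left hT hφ0pos.le
    calc |(∫ t in Ioc (0:ℝ) 1, (P0 N t - φ0 * t) * E t) - φ0 * T|
        ≤ K * (2/b^3) + φ0 * (2/b^3) := by linarith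
      _ = (2*K + 2*φ0)/b^3 := by ring
  -- express uStar
  have huStar : uStar N x = A * r ^ (-(N:ℝ)) := by
    rw [uStar, hAdef, ← integral_mul_const]
    apply setIntegral_congr_fun measurableSet_Ioc
    intro t ht
    simp only [← hrdef, hpow t]
    all_goals ring
  -- final computation
  have hrpowpos : 0 < r ^ (-(N:ℝ)) := Real.rpow_pos_of_pos hx0 _
  have hlogsq : (Real.log r)^2 = L^2 := by
    rw [show Real.log r = -L by simp [hLdef]]; ring
  have habslog : |Real.log r| = L := by
    rw [hLdef, abs_of_neg (by linarith : Real.log r < 0)]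
  have hb2 : b^2 = 4*L^2 := by rw [hbdef]; ring
  have hb3 : b^3 = 8*L^3 := by rw [hbdef]; ring
  have key : uStar N x - (Real.Gamma ((N : ℝ)/2) / (4 * Real.pi ^ ((N : ℝ)/2))) *
      (r ^ (-(N : ℝ)) / (Real.log r)^2) = (A - φ0/b^2) * r ^ (-(N:ℝ)) := by
    rw [huStar, hCst, hlogsq, hb2]
    field_simp
  rw [key, abs_mul, abs_of_pos hrpowpos, habslog]
  have hL3 : 0 < L^3 := by positivity
  calc |A - φ0/b^2| * r ^ (-(N:ℝ)) ≤ ((2*K + 2*φ0)/b^3) * r ^ (-(N:ℝ)) :=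
        mul_le_mul_of_nonneg_right hAbound hrpowpos.le
    _ = (K + φ0)/4 * r ^ (-(N:ℝ)) / L^3 := by rw [hb3]; field_simp; ring
end

section
/- Let N ≥ 3 and u*(x) = ∫_0^1 P_0(t) |x|^{2t-N} dt with P_0(t) = π^{-N/2} 4^{-t} Γ((N-2t)/2)/Γ(t). Then there exists c > 0 such that for all |x| > 1, 0 < u*(x) ≤ c(|x|^{2-N}/ln|x| + |x|^{-N}/(ln|x|)²). -/
open MeasureTheory

theorem stmt13 (N : ℕ) (hN : 3 ≤ N) :
    ∃ c : ℝ, 0 < c ∧ ∀ x : EuclideanSpace ℝ (Fin N), 1 < ‖x‖ →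
      0 < uStar N x ∧
      uStar N x ≤ c * (‖x‖ ^ (2 - (N : ℝ)) / Real.log ‖x‖
          + ‖x‖ ^ (-(N : ℝ)) / (Real.log ‖x‖)^2) := by
  have hN3 : (3 : ℝ) ≤ (N : ℝ) := by exact_mod_cast hN
  -- continuity of Gamma at positive points
  have hΓc : ∀ s : ℝ, 0 < s → ContinuousAt Real.Gamma s := by
    intro s hs
    refine (Real.differentiableAt_Gamma (fun n => ?_)).continuousAt
    have : (0:ℝ) ≤ n := n.cast_nonneg
    intro h; rw [h] at hs; linarith
  -- upper bound M for Gamma on [1/2, N/2]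
  obtain ⟨sM, hsM, hMmax⟩ := isCompact_Icc.exists_isMaxOn
    (⟨1/2, le_refl _, by linarith⟩ : (Set.Icc (1/2:ℝ) (N/2)).Nonempty)
    (fun s hs => (hΓc s (by rcases hs with ⟨h1, _⟩; linarith)).continuousWithinAt)
  have hM : ∀ s ∈ Set.Icc (1/2:ℝ) (N/2), Real.Gamma s ≤ Real.Gamma sM :=
    isMaxOn_iff.mp hMmax
  set M := Real.Gamma sM with hMdef
  have hMpos : 0 < M := Real.Gamma_pos_of_pos (by rcases hsM with ⟨h1, _⟩; linarith)
  -- lower bound m for Gamma on [1, 2]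
  obtain ⟨sm, hsm, hmmin⟩ := isCompact_Icc.exists_isMinOn
    (⟨1, le_refl _, by norm_num⟩ : (Set.Icc (1:ℝ) 2).Nonempty)
    (fun s hs => (hΓc s (by rcases hs with ⟨h1, _⟩; linarith)).continuousWithinAt)
  have hm : ∀ s ∈ Set.Icc (1:ℝ) 2, Real.Gamma sm ≤ Real.Gamma s :=
    isMinOn_iff.mp hmmin
  set m := Real.Gamma sm with hmdef
  have hmpos : 0 < m := Real.Gamma_pos_of_pos (by rcases hsm with ⟨h1, _⟩; linarith)
  set C : ℝ := M / m with hCdef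
  have hCpos : 0 < C := div_pos hMpos hmpos
  -- pointwise bounds on P0
  have hP0pos : ∀ t ∈ Set.Ioc (0:ℝ) 1, 0 < P0 N t := by
    intro t ht
    have h1 : 0 < Real.Gamma t := Real.Gamma_pos_of_pos ht.1
    have h2 : 0 < Real.Gamma (((N:ℝ) - 2*t)/2) :=
      Real.Gamma_pos_of_pos (by rcases ht with ⟨_, h⟩; linarith)
    have h3 : (0:ℝ) < Real.pi ^ (-(N : ℝ)/2) := Real.rpow_pos_of_pos Real.pi_pos _
    have h4 : (0:ℝ) < (4:ℝ) ^ (-t) := Real.rpow_pos_of_pos (by norm_num) _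
    unfold P0
    positivity
  have hP0le : ∀ t ∈ Set.Ioc (0:ℝ) 1, P0 N t ≤ C := by
    intro t ht
    have hΓt : m ≤ Real.Gamma t := by
      have ht1 : t + 1 ∈ Set.Icc (1:ℝ) 2 := ⟨by linarith [ht.1], by linarith [ht.2]⟩
      have := hm _ ht1
      have hadd : Real.Gamma (t + 1) = t * Real.Gamma t := Real.Gamma_add_one (ne_of_gt ht.1)
      have hΓtpos : 0 < Real.Gamma t := Real.Gamma_pos_of_pos ht.1
      nlinarith [ht.1, ht.2]
    have hΓarg : Real.Gamma (((N:ℝ) - 2*t)/2) ≤ M := by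
      refine hM _ ⟨by linarith [ht.2], by linarith [ht.1]⟩
    have h3 : Real.pi ^ (-(N : ℝ)/2) ≤ 1 :=
      Real.rpow_le_one_of_one_le_of_nonpos (by linarith [Real.pi_gt_three]) (by linarith)
    have h4 : (4:ℝ) ^ (-t) ≤ (1:ℝ) :=
      Real.rpow_le_one_of_one_le_of_nonpos (by norm_num) (by linarith [ht.1])
    have h3' : (0:ℝ) < Real.pi ^ (-(N : ℝ)/2) := Real.rpow_pos_of_pos Real.pi_pos _
    have h4' : (0:ℝ) < (4:ℝ) ^ (-t) := Real.rpow_pos_of_pos (by norm_num) _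
    have hΓargpos : 0 < Real.Gamma (((N:ℝ) - 2*t)/2) :=
      Real.Gamma_pos_of_pos (by rcases ht with ⟨_, h⟩; linarith)
    have hΓtpos : 0 < Real.Gamma t := Real.Gamma_pos_of_pos ht.1
    unfold P0
    rw [hCdef]
    calc Real.pi ^ (-(N : ℝ)/2) * (4 : ℝ) ^ (-t) * Real.Gamma (((N:ℝ) - 2*t)/2) / Real.Gamma t
        ≤ 1 * 1 * M / m := by gcongr
      _ = M / m := by ring
  exact ⟨C/2 + 1, by positivity, by
    intro x hr
    set r := ‖x‖ with hrdef
    have hr0 : (0:ℝ) < r := by linarith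
    set L := Real.log r with hLdef
    have hL : 0 < L := Real.log_pos hr
    -- the integrand
    set f : ℝ → ℝ := fun t => P0 N t * r ^ (2*t - (N:ℝ)) with hfdef
    have hfin : IsFiniteMeasure (volume.restrict (Set.Ioc (0:ℝ) 1)) := by
      constructor
      rw [Measure.restrict_apply_univ]
      exact measure_Ioc_lt_top
    have hfcont : ContinuousOn f (Set.Ioc (0:ℝ) 1) := by
      intro t ht
      apply ContinuousAt.continuousWithinAt
      have h1 : ContinuousAt (fun t : ℝ => (4:ℝ) ^ (-t)) t :=
        (Real.continuousAt_const_rpow (by norm_num : (4:ℝ) ≠ 0)).comp (continuousAt_id.neg)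
      have h2 : ContinuousAt (fun t : ℝ => Real.Gamma (((N:ℝ) - 2*t)/2)) t := by
        refine (hΓc _ (by rcases ht with ⟨_, h⟩; linarith)).comp ?_
        fun_prop
      have h3 : ContinuousAt (fun t : ℝ => Real.Gamma t) t := hΓc t ht.1
      have h4 : ContinuousAt (fun t : ℝ => r ^ (2*t - (N:ℝ))) t :=
        (Real.continuousAt_const_rpow (ne_of_gt hr0)).comp (by fun_prop)
      have hΓt : Real.Gamma t ≠ 0 := ne_of_gt (Real.Gamma_pos_of_pos ht.1)
      have : ContinuousAt (P0 N) t := by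
        unfold P0
        exact ((continuousAt_const.mul h1).mul h2).div h3 hΓt
      exact this.mul h4
    have hfmeas : AEStronglyMeasurable f (volume.restrict (Set.Ioc (0:ℝ) 1)) :=
      hfcont.aestronglyMeasurable measurableSet_Ioc
    have hrpow_le : ∀ t ∈ Set.Ioc (0:ℝ) 1, r ^ (2*t - (N:ℝ)) ≤ r ^ (2 - (N:ℝ)) := by
      intro t ht
      exact Real.rpow_le_rpow_of_exponent_le (le_of_lt hr) (by linarith [ht.2])
    have hfInt : IntegrableOn f (Set.Ioc (0:ℝ) 1) volume := by
      refine ⟨hfmeas, HasFiniteIntegral.of_bounded (C := C * r ^ (2 - (N:ℝ)))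
        ((ae_restrict_iff' measurableSet_Ioc).2 (ae_of_all _ fun t ht => ?_))⟩
      have h1 := hP0pos t ht
      have h2 := hP0le t ht
      have h3 : (0:ℝ) < r ^ (2*t - (N:ℝ)) := Real.rpow_pos_of_pos hr0 _
      rw [Real.norm_eq_abs, abs_of_pos (mul_pos h1 h3)]
      calc P0 N t * r ^ (2*t - (N:ℝ)) ≤ C * r ^ (2*t - (N:ℝ)) :=
            mul_le_mul_of_nonneg_right h2 (le_of_lt h3)
        _ ≤ C * r ^ (2 - (N:ℝ)) :=
            mul_le_mul_of_nonneg_left (hrpow_le t ht) (le_of_lt hCpos)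
    constructor
    · -- positivity
      rw [uStar]
      rw [setIntegral_pos_iff_support_of_nonneg_ae
        ((ae_restrict_iff' measurableSet_Ioc).2 (ae_of_all _ fun t ht =>
          le_of_lt (mul_pos (hP0pos t ht) (Real.rpow_pos_of_pos hr0 _)))) hfInt]
      have hsub : Set.Ioc (0:ℝ) 1 ⊆ Function.support f ∩ Set.Ioc (0:ℝ) 1 := by
        intro t ht
        exact ⟨ne_of_gt (mul_pos (hP0pos t ht) (Real.rpow_pos_of_pos hr0 _)), ht⟩
      calc (0:ENNReal) < volume (Set.Ioc (0:ℝ) 1) := by simp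
        _ ≤ volume (Function.support f ∩ Set.Ioc (0:ℝ) 1) := measure_mono hsub
    · -- upper bound
      have hgcont : Continuous (fun t : ℝ => C * r ^ (2*t - (N:ℝ))) := by
        apply continuous_const.mul
        rw [continuous_iff_continuousAt]
        intro t
        exact (Real.continuousAt_const_rpow (ne_of_gt hr0)).comp (by fun_prop)
      have hgInt : IntegrableOn (fun t : ℝ => C * r ^ (2*t - (N:ℝ))) (Set.Ioc (0:ℝ) 1) volume :=
        (hgcont.continuousOn.integrableOn_compact isCompact_Icc).mono_set
          Set.Ioc_subset_Icc_self
      have hmono : uStar N x ≤ ∫ t in Set.Ioc (0:ℝ) 1, C * r ^ (2*t - (N:ℝ)) := by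
        rw [uStar]
        refine setIntegral_mono_on hfInt hgInt measurableSet_Ioc (fun t ht => ?_)
        have h3 : (0:ℝ) < r ^ (2*t - (N:ℝ)) := Real.rpow_pos_of_pos hr0 _
        gcongr
        exact hP0le t ht
      -- compute the integral of the exponential
      have hrexp : ∀ t : ℝ, r ^ (2*t - (N:ℝ)) = Real.exp (2*L*t - (N:ℝ)*L) := by
        intro t
        rw [Real.rpow_def_of_pos hr0, hLdef]
        ring_nf
      have hderiv : ∀ t : ℝ, HasDerivAt (fun s : ℝ => Real.exp (2*L*s - (N:ℝ)*L) / (2*L))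
          (Real.exp (2*L*t - (N:ℝ)*L)) t := by
        intro t
        have h1 : HasDerivAt (fun s : ℝ => 2*L*s - (N:ℝ)*L) (2*L) t := by
          simpa using ((hasDerivAt_id t).const_mul (2*L)).sub_const ((N:ℝ)*L)
        have h2 := (h1.exp).div_const (2*L)
        refine h2.congr_deriv ?_
        rw [mul_div_cancel_right₀ _ (mul_pos two_pos hL).ne']
      have hcomp : ∫ t in Set.Ioc (0:ℝ) 1, Real.exp (2*L*t - (N:ℝ)*L)
          = Real.exp (2*L - (N:ℝ)*L)/(2*L) - Real.exp (-((N:ℝ)*L))/(2*L) := by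
        rw [← intervalIntegral.integral_of_le (zero_le_one)]
        rw [intervalIntegral.integral_eq_sub_of_hasDerivAt (fun t _ => hderiv t)
          ((by fun_prop : Continuous fun t : ℝ => Real.exp (2*L*t - (N:ℝ)*L)).intervalIntegrable 0 1)]
        norm_num
      have hval : ∫ t in Set.Ioc (0:ℝ) 1, C * r ^ (2*t - (N:ℝ))
          = C * (Real.exp (2*L - (N:ℝ)*L)/(2*L) - Real.exp (-((N:ℝ)*L))/(2*L)) := by
        rw [integral_const_mul]
        congr 1
        rw [← hcomp]
        exact setIntegral_congr_fun measurableSet_Ioc (fun t _ => hrexp t)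
      have hexp1 : Real.exp (2*L - (N:ℝ)*L) = r ^ (2 - (N:ℝ)) := by
        rw [Real.rpow_def_of_pos hr0, hLdef]; ring_nf
      have hfinal : uStar N x ≤ (C/2) * (r ^ (2 - (N:ℝ)) / L) := by
        refine hmono.trans ?_
        rw [hval, hexp1]
        have hid : C * (r ^ (2 - (N:ℝ))/(2*L) - Real.exp (-((N:ℝ)*L))/(2*L))
            = C/2 * (r ^ (2 - (N:ℝ))/L) - C * (Real.exp (-((N:ℝ)*L))/(2*L)) := by ring
        rw [hid]
        have hpos : 0 ≤ C * (Real.exp (-((N:ℝ)*L))/(2*L)) := by positivity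
        linarith
      refine hfinal.trans ?_
      have ht2 : (0:ℝ) ≤ r ^ (-(N:ℝ)) / L^2 := by positivity
      have ht1 : (0:ℝ) ≤ r ^ (2 - (N:ℝ)) / L := by positivity
      nlinarith [mul_nonneg (le_of_lt hCpos) ht2]⟩
end

section
/- Let M: [0,∞) → [0,∞) be a C¹ increasing function with M(0)=0 satisfying ∫_2^∞ M(t)/(t² ln² t) dt < ∞, and let g: B_1 → [0,∞) be measurable with g(x) ≤ c₀ |x|^{-N}/(1 + ln²|x|) for 0 < |x| < 1 and some c₀ > 0. Then ∫_{B_1} M(g(x)) dx < ∞. -/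
open MeasureTheory

open MeasureTheory Set Filter Metric

private lemma scalar_ineq (N : ℕ) (hN : 1 ≤ N) (c₀ t L ℓ m : ℝ) (hc₀ : 0 < c₀)
    (ht0 : 0 < t) (hL4 : 4 ≤ L) (hl0 : 0 < ℓ) (hlsq : ℓ^2 ≤ 4*L^2) (hm : 0 ≤ m) :
    1/((N:ℝ)*t^2) * m ≤ (8*(N:ℝ)*c₀) * (c₀ * (1 + (L^2 - 2*L)/(N:ℝ)^2)
      / (1 + L^2/(N:ℝ)^2)^2 * (m / ((c₀ * t / (1 + L^2/(N:ℝ)^2))^2 * ℓ^2))) := by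
  have hNR : (0:ℝ) < N := by exact_mod_cast hN
  have hDne : (1 + L^2/(N:ℝ)^2) ≠ 0 := by positivity
  have hA2 : L^2 / (2*(N:ℝ)^2) ≤ 1 + (L^2 - 2*L)/(N:ℝ)^2 := by
    rw [div_le_iff₀ (by positivity : (0:ℝ) < 2*(N:ℝ)^2)]
    have hAe : (1 + (L^2 - 2*L)/(N:ℝ)^2) * (2*(N:ℝ)^2)
        = 2*(N:ℝ)^2 + 2*(L^2 - 2*L) := by field_simp
    rw [hAe]; nlinarith
  have key : (8*(N:ℝ)*c₀) * (c₀ * (1 + (L^2 - 2*L)/(N:ℝ)^2) / (1 + L^2/(N:ℝ)^2)^2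
        * (m / ((c₀ * t / (1 + L^2/(N:ℝ)^2))^2 * ℓ^2)))
      = m * (8*(N:ℝ) * (1 + (L^2 - 2*L)/(N:ℝ)^2) / (t^2 * ℓ^2)) := by
    field_simp
  rw [key, show 1/((N:ℝ)*t^2) * m = m * (1/((N:ℝ)*t^2)) by ring]
  apply mul_le_mul_of_nonneg_left _ hm
  rw [div_le_div_iff₀ (by positivity) (by positivity)]
  have h8 : 4*L^2 ≤ 8*(N:ℝ)^2 * (1 + (L^2 - 2*L)/(N:ℝ)^2) := by
    rw [div_le_iff₀ (by positivity : (0:ℝ) < 2*(N:ℝ)^2)] at hA2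
    nlinarith
  have h9 : ℓ^2 ≤ 8*(N:ℝ)^2 * (1 + (L^2 - 2*L)/(N:ℝ)^2) := le_trans hlsq h8
  nlinarith [mul_le_mul_of_nonneg_right h9 (sq_nonneg t)]

lemma key_radial (N : ℕ) (hN : 1 ≤ N) (M : ℝ → ℝ) (hM_smooth : ContDiff ℝ 1 M)
    (hM_mono : MonotoneOn M (Set.Ici 0)) (hM_nonneg : ∀ t : ℝ, 0 ≤ t → 0 ≤ M t)
    (hM_int : IntegrableOn (fun t : ℝ => M t / (t^2 * (Real.log t)^2)) (Set.Ici 2))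
    (c₀ : ℝ) (hc₀ : 0 < c₀) :
    IntegrableOn
      (fun r : ℝ => r ^ (N - 1) * M (c₀ * r ^ (-(N : ℝ)) / (1 + (Real.log r)^2)))
      (Set.Ioo 0 1) := by
  have hNR : (0:ℝ) < N := by exact_mod_cast hN
  have hNne : (N:ℝ) ≠ 0 := ne_of_gt hNR
  set F : ℝ → ℝ := fun r => M (c₀ * r ^ (-(N : ℝ)) / (1 + (Real.log r)^2)) with hFdef
  set G : ℝ → ℝ := fun r => r ^ (N - 1) * F r with hGdef
  set σ : ℝ → ℝ := fun t => c₀ * t / (1 + (Real.log t)^2 / (N:ℝ)^2) with hσdef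
  set σ' : ℝ → ℝ := fun t =>
    c₀ * (1 + ((Real.log t)^2 - 2 * Real.log t) / (N:ℝ)^2)
      / (1 + (Real.log t)^2 / (N:ℝ)^2)^2 with hσ'def
  have hDpos : ∀ t : ℝ, 0 < 1 + (Real.log t)^2 / (N:ℝ)^2 := by
    intro t; positivity
  -- choose a large threshold T
  obtain ⟨T, hT1, hT⟩ : ∃ T : ℝ, 1 ≤ T ∧ ∀ t, T < t →
      4 ≤ Real.log t ∧ |Real.log c₀| ≤ Real.log t ∧ 2 ≤ σ t := by
    have ev1 : ∀ᶠ t : ℝ in atTop, 4 ≤ Real.log t :=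
      Real.tendsto_log_atTop.eventually_ge_atTop 4
    have ev2 : ∀ᶠ t : ℝ in atTop, |Real.log c₀| ≤ Real.log t :=
      Real.tendsto_log_atTop.eventually_ge_atTop _
    have ev3 : ∀ᶠ t : ℝ in atTop, 2 ≤ σ t := by
      have hlog : ∀ᶠ t : ℝ in atTop, |Real.log t| ≤ 1 * ‖t ^ ((1:ℝ)/4)‖ := by
        simpa using (isLittleO_log_rpow_atTop (by norm_num : (0:ℝ) < 1/4)).bound one_pos
      have hpow : Tendsto (fun t : ℝ => c₀ / 2 * t ^ ((1:ℝ)/2)) atTop atTop :=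
        (tendsto_rpow_atTop (by norm_num : (0:ℝ) < 1/2)).const_mul_atTop (by positivity)
      filter_upwards [hlog, hpow.eventually_ge_atTop 2, eventually_ge_atTop (1:ℝ)]
        with t hlt hge h1t
      have ht0 : (0:ℝ) < t := lt_of_lt_of_le one_pos h1t
      have hq : (Real.log t)^2 ≤ t ^ ((1:ℝ)/2) := by
        have h1 : (Real.log t)^2 = |Real.log t|^2 := (sq_abs _).symm
        have h2 : |Real.log t|^2 ≤ (t ^ ((1:ℝ)/4))^2 := by
          apply pow_le_pow_left₀ (abs_nonneg _)
          simpa [Real.norm_eq_abs, abs_of_nonneg (Real.rpow_nonneg ht0.le _)] using hlt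
        have h3 : (t ^ ((1:ℝ)/4))^2 = t ^ ((1:ℝ)/2) := by
          rw [← Real.rpow_natCast (t ^ ((1:ℝ)/4)) 2, ← Real.rpow_mul ht0.le]
          norm_num
        rw [h1]; rw [h3] at h2; exact h2
      have hD : 1 + (Real.log t)^2 / (N:ℝ)^2 ≤ 2 * t ^ ((1:ℝ)/2) := by
        have hN1 : (1:ℝ) ≤ (N:ℝ)^2 := by
          have : (1:ℝ) ≤ (N:ℝ) := by exact_mod_cast hN
          nlinarith
        have : (Real.log t)^2 / (N:ℝ)^2 ≤ (Real.log t)^2 := by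
          apply div_le_self (sq_nonneg _) hN1
        have h1 : (1:ℝ) ≤ t ^ ((1:ℝ)/2) := Real.one_le_rpow h1t (by norm_num)
        nlinarith
      have hσge : c₀ / 2 * t ^ ((1:ℝ)/2) ≤ σ t := by
        rw [hσdef]
        rw [le_div_iff₀ (hDpos t)]
        have hts : t ^ ((1:ℝ)/2) * t ^ ((1:ℝ)/2) = t := by
          rw [← Real.rpow_add ht0]; norm_num
        calc c₀ / 2 * t ^ ((1:ℝ)/2) * (1 + (Real.log t)^2 / (N:ℝ)^2)
            ≤ c₀ / 2 * t ^ ((1:ℝ)/2) * (2 * t ^ ((1:ℝ)/2)) := by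
              apply mul_le_mul_of_nonneg_left hD; positivity
          _ = c₀ * t := by
              rw [show c₀/2 * t^((1:ℝ)/2) * (2*t^((1:ℝ)/2))
                  = c₀ * (t^((1:ℝ)/2)*t^((1:ℝ)/2)) from by ring, hts]
      linarith
    obtain ⟨T₀, hT₀⟩ := eventually_atTop.mp ((ev1.and ev2).and ev3)
    refine ⟨max T₀ 1, le_max_right _ _, fun t ht => ?_⟩
    have := hT₀ t (le_of_lt (lt_of_le_of_lt (le_max_left _ _) ht))
    exact ⟨this.1.1, this.1.2, this.2⟩
  
  have hTpos : (0:ℝ) < T := lt_of_lt_of_le one_pos hT1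
  have htpos : ∀ t : ℝ, T < t → (0:ℝ) < t := fun t ht => lt_trans hTpos ht
  set ε : ℝ := T ^ (-(1/(N:ℝ))) with hεdef
  have hεpos : 0 < ε := Real.rpow_pos_of_pos hTpos _
  have hεle1 : ε ≤ 1 :=
    Real.rpow_le_one_of_one_le_of_nonpos hT1 (neg_nonpos.mpr (by positivity))
  -- continuity of F and G on positives
  have hFcont : ContinuousOn F (Ioi (0:ℝ)) := by
    apply hM_smooth.continuous.comp_continuousOn
    apply ContinuousOn.div
    · exact continuousOn_const.mul
        (continuousOn_id.rpow_const (fun r hr => Or.inl (ne_of_gt hr)))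
    · exact continuousOn_const.add
        ((Real.continuousOn_log.mono (fun r hr => ne_of_gt hr)).pow 2)
    · intro r _; positivity
  have hGcont : ContinuousOn G (Ioi (0:ℝ)) := ((continuous_pow (N-1)).continuousOn).mul hFcont
  -- Part A : annulus
  have hA : IntegrableOn G (Icc ε 1) := by
    apply ContinuousOn.integrableOn_Icc
    exact hGcont.mono (fun r hr => lt_of_lt_of_le hεpos hr.1)
  -- Part B : core
  set f : ℝ → ℝ := fun t => t ^ (-(1/(N:ℝ))) with hfdef
  set f' : ℝ → ℝ := fun t => (-(1/(N:ℝ))) * t ^ (-(1/(N:ℝ)) - 1) with hf'def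
  have hfder : ∀ t ∈ Ioi T, HasDerivWithinAt f (f' t) (Ioi T) t := fun t ht =>
    (Real.hasDerivAt_rpow_const (Or.inl (ne_of_gt (htpos t ht)))).hasDerivWithinAt
  have hfinj : InjOn f (Ioi T) := by
    have : StrictAntiOn f (Ioi T) := fun a ha b hb hab =>
      Real.rpow_lt_rpow_of_neg (htpos a ha) hab (neg_neg_iff_pos.mpr (by positivity))
    exact this.injOn
  -- σ derivative
  have hσder_at : ∀ t : ℝ, 0 < t → HasDerivAt σ (σ' t) t := by
    intro t ht
    have hnum : HasDerivAt (fun t : ℝ => c₀ * t) c₀ t := by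
      simpa using (hasDerivAt_id t).const_mul c₀
    have hden : HasDerivAt (fun t : ℝ => 1 + (Real.log t)^2 / (N:ℝ)^2)
        ((2 * Real.log t ^ 1 * t⁻¹) / (N:ℝ)^2) t := by
      have hlog := Real.hasDerivAt_log (ne_of_gt ht)
      exact ((hlog.pow 2).div_const ((N:ℝ)^2)).const_add 1
    have h := hnum.div hden (ne_of_gt (hDpos t))
    refine h.congr_deriv ?_
    rw [hσ'def]
    field_simp
    ring
  have hσ'pos : ∀ t : ℝ, T < t → 0 < σ' t := by
    intro t ht
    obtain ⟨hL4, -, -⟩ := hT t ht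
    have h1 : 0 ≤ (Real.log t)^2 - 2 * Real.log t := by nlinarith
    have h2 : 0 < 1 + ((Real.log t)^2 - 2 * Real.log t) / (N:ℝ)^2 := by positivity
    exact div_pos (mul_pos hc₀ h2) (pow_pos (hDpos t) 2)
  have hσmono : StrictMonoOn σ (Ioi T) := by
    apply strictMonoOn_of_deriv_pos (convex_Ioi T)
    · exact fun t ht => (hσder_at t (htpos t ht)).continuousAt.continuousWithinAt
    · rw [interior_Ioi]
      intro t ht
      rw [(hσder_at t (htpos t ht)).deriv]
      exact hσ'pos t ht
  have hσder : ∀ t ∈ Ioi T, HasDerivWithinAt σ (σ' t) (Ioi T) t :=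
    fun t ht => (hσder_at t (htpos t ht)).hasDerivWithinAt
  have himg2 : σ '' (Ioi T) ⊆ Ici 2 := by
    rintro s ⟨t, ht, rfl⟩; exact (hT t ht).2.2
  set H : ℝ → ℝ := fun s => M s / (s^2 * (Real.log s)^2) with hHdef
  have hσside : IntegrableOn (fun t => |σ' t| • H (σ t)) (Ioi T) :=
    (integrableOn_image_iff_integrableOn_abs_deriv_smul measurableSet_Ioi hσder
      hσmono.injOn H).mp (hM_int.mono_set himg2)
  have hbound : Integrable (fun t => (8*(N:ℝ)*c₀) * (|σ' t| • H (σ t)))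
      (volume.restrict (Ioi T)) := hσside.const_mul _
  -- pointwise identity and inequality
  have heq1 : ∀ t : ℝ, T < t → |f' t| • G (f t) = 1/((N:ℝ)*t^2) * M (σ t) := by
    intro t ht
    have ht0 : (0:ℝ) < t := htpos t ht
    have hft : 0 < f t := Real.rpow_pos_of_pos ht0 _
    have hpow1 : (f t) ^ (-(N:ℝ)) = t := by
      show (t ^ (-(1/(N:ℝ)))) ^ (-(N:ℝ)) = t
      rw [← Real.rpow_mul ht0.le, show -(1/(N:ℝ)) * -(N:ℝ) = 1 by field_simp]
      exact Real.rpow_one t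
    have hlogf : Real.log (f t) = -(1/(N:ℝ)) * Real.log t := Real.log_rpow ht0 _
    have hinner : c₀ * (f t) ^ (-(N:ℝ)) / (1 + (Real.log (f t))^2) = σ t := by
      rw [hpow1, hlogf]
      have hd : (-(1/(N:ℝ)) * Real.log t)^2 = (Real.log t)^2 / (N:ℝ)^2 := by
        rw [mul_pow]; field_simp
      rw [hd]
    have hGf : G (f t) = (f t) ^ (N - 1) * M (σ t) := by
      rw [← hinner]
    have habs : |f' t| = (1/(N:ℝ)) * t ^ (-(1/(N:ℝ)) - 1) := by
      show |(-(1/(N:ℝ))) * t ^ (-(1/(N:ℝ)) - 1)| = _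
      rw [abs_mul, abs_neg, abs_of_nonneg (by positivity : (0:ℝ) ≤ 1/(N:ℝ)),
        abs_of_pos (Real.rpow_pos_of_pos ht0 _)]
    have hpow2 : (f t) ^ (N - 1) = t ^ (-(1/(N:ℝ)) * ((N:ℝ) - 1)) := by
      have hc : ((N - 1 : ℕ) : ℝ) = (N:ℝ) - 1 := by
        rw [Nat.cast_sub hN]; norm_num
      rw [show f t = t ^ (-(1/(N:ℝ))) from rfl, ← Real.rpow_natCast (t ^ (-(1/(N:ℝ)))) (N - 1),
        hc, ← Real.rpow_mul ht0.le]
    calc |f' t| • G (f t)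
        = ((1/(N:ℝ)) * t ^ (-(1/(N:ℝ)) - 1)) *
          (t ^ (-(1/(N:ℝ)) * ((N:ℝ) - 1)) * M (σ t)) := by
          rw [smul_eq_mul, hGf, habs, hpow2]
      _ = (1/(N:ℝ)) * (t ^ (-(1/(N:ℝ)) - 1) * t ^ (-(1/(N:ℝ)) * ((N:ℝ) - 1))) * M (σ t) := by
          ring
      _ = 1/((N:ℝ)*t^2) * M (σ t) := by
          rw [← Real.rpow_add ht0,
            show (-(1/(N:ℝ)) - 1) + (-(1/(N:ℝ)) * ((N:ℝ) - 1)) = -2 by field_simp; ring,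
            show (-2:ℝ) = -((2:ℕ):ℝ) by norm_num, Real.rpow_neg ht0.le, Real.rpow_natCast]
          rw [show (1/(N:ℝ)) * ((t^2)⁻¹) = 1/((N:ℝ)*t^2) by field_simp]
  have hineq : ∀ t : ℝ, T < t →
      1/((N:ℝ)*t^2) * M (σ t) ≤ (8*(N:ℝ)*c₀) * (σ' t * H (σ t)) := by
    intro t ht
    obtain ⟨hL4, hLc, hS2⟩ := hT t ht
    have ht0 : (0:ℝ) < t := htpos t ht
    have hS0 : (0:ℝ) < σ t := lt_of_lt_of_le (by norm_num) hS2
    have hSle : σ t ≤ c₀ * t := by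
      apply div_le_self (by positivity)
      exact le_add_of_nonneg_right (by positivity)
    have hl0 : 0 < Real.log (σ t) := Real.log_pos (lt_of_lt_of_le one_lt_two hS2)
    have hlle : Real.log (σ t) ≤ 2 * Real.log t := by
      have h1 : Real.log (σ t) ≤ Real.log (c₀ * t) := Real.log_le_log hS0 hSle
      rw [Real.log_mul (ne_of_gt hc₀) (ne_of_gt ht0)] at h1
      have h2 : Real.log c₀ ≤ |Real.log c₀| := le_abs_self _
      linarith
    have hlsq : (Real.log (σ t))^2 ≤ 4 * (Real.log t)^2 := by nlinarith
    have hm : 0 ≤ M (σ t) := hM_nonneg _ hS0.le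
    set S := σ t with hSdef
    set L := Real.log t with hLdef
    set ℓ := Real.log S with hℓdef
    set m := M S with hmdef
    have hσ't : σ' t = c₀ * (1 + (L^2 - 2*L)/(N:ℝ)^2) / (1 + L^2/(N:ℝ)^2)^2 := rfl
    have hSeq : S = c₀ * t / (1 + L^2/(N:ℝ)^2) := rfl
    have hHS : H S = m / (S^2 * ℓ^2) := rfl
    rw [hHS, hσ't, hSeq]
    exact scalar_ineq N hN c₀ t L ℓ m hc₀ ht0 hL4 hl0 hlsq hm
  have hRHS : IntegrableOn (fun t => |f' t| • G (f t)) (Ioi T) := by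
    apply Integrable.mono' hbound
    · apply ContinuousOn.aestronglyMeasurable _ measurableSet_Ioi
      apply ContinuousOn.smul (f := fun t => |f' t|) (g := fun t => G (f t))
      · exact (continuousOn_const.mul (continuousOn_id.rpow_const
          (fun t ht => Or.inl (ne_of_gt (htpos t ht))))).abs
      · exact hGcont.comp (continuousOn_id.rpow_const
          (fun t ht => Or.inl (ne_of_gt (htpos t ht))))
          (fun t ht => Real.rpow_pos_of_pos (htpos t ht) _)
    · filter_upwards [ae_restrict_mem measurableSet_Ioi] with t ht
      have ht' : T < t := ht
      have hnn : 0 ≤ |f' t| • G (f t) := by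
        rw [heq1 t ht']
        have : 0 ≤ M (σ t) := hM_nonneg _ (le_trans (by norm_num) (hT t ht').2.2)
        positivity
      rw [Real.norm_eq_abs, abs_of_nonneg hnn, heq1 t ht']
      calc 1/((N:ℝ)*t^2) * M (σ t) ≤ (8*(N:ℝ)*c₀) * (σ' t * H (σ t)) := hineq t ht'
        _ = (8*(N:ℝ)*c₀) * (|σ' t| • H (σ t)) := by
            rw [abs_of_pos (hσ'pos t ht'), smul_eq_mul]
  have himgf : Ioo (0:ℝ) ε ⊆ f '' (Ioi T) := by
    rintro r ⟨hr0, hrε⟩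
    have hNneg : -(N:ℝ) < 0 := neg_lt_zero.mpr hNR
    refine ⟨r ^ (-(N:ℝ)), ?_, ?_⟩
    · have h1 : ε ^ (-(N:ℝ)) < r ^ (-(N:ℝ)) :=
        Real.rpow_lt_rpow_of_neg hr0 hrε hNneg
      have h2 : ε ^ (-(N:ℝ)) = T := by
        rw [hεdef, ← Real.rpow_mul hTpos.le]
        rw [show -(1/(N:ℝ)) * -(N:ℝ) = 1 by field_simp]
        exact Real.rpow_one T
      rw [h2] at h1
      exact h1
    · show (r ^ (-(N:ℝ))) ^ (-(1/(N:ℝ))) = r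
      rw [← Real.rpow_mul hr0.le]
      rw [show -(N:ℝ) * -(1/(N:ℝ)) = 1 by field_simp]
      exact Real.rpow_one r
  have hB : IntegrableOn G (Ioo 0 ε) :=
    ((integrableOn_image_iff_integrableOn_abs_deriv_smul measurableSet_Ioi hfder
      hfinj G).mpr hRHS).mono_set himgf
  have hsub : Ioo (0:ℝ) 1 ⊆ Ioo 0 ε ∪ Icc ε 1 := by
    rintro r ⟨h0, h1⟩
    by_cases h : r < ε
    · exact Or.inl ⟨h0, h⟩
    · exact Or.inr ⟨not_lt.mp h, le_of_lt h1⟩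
  exact (hB.union hA).mono_set hsub

local notation "dim" => Module.finrank ℝ

lemma lintegral_fun_norm_addHaar' {E : Type*} [NormedAddCommGroup E] [NormedSpace ℝ E]
    [MeasurableSpace E] [BorelSpace E] [FiniteDimensional ℝ E] [Nontrivial E]
    (μ : Measure E) [μ.IsAddHaarMeasure] (f : ℝ → ENNReal) (hf : Measurable f) :
    ∫⁻ x, f ‖x‖ ∂μ
      = μ.toSphere univ * ∫⁻ y in Ioi (0:ℝ), ENNReal.ofReal (y ^ (dim E - 1)) * f y := by
  have h0 : ∫⁻ x, f ‖x‖ ∂μ = ∫⁻ x : ({0}ᶜ : Set E), f ‖x.1‖ ∂(μ.comap (↑)) := by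
    rw [lintegral_subtype_comap (measurableSet_singleton (0:E)).compl (fun a => f ‖a‖),
      MeasureTheory.restrict_compl_singleton]
  rw [h0]
  have h1 : ∫⁻ x : ({0}ᶜ : Set E), f ‖x.1‖ ∂(μ.comap (↑))
      = ∫⁻ p : sphere (0:E) 1 × Ioi (0:ℝ), f p.2.1
          ∂(μ.toSphere.prod (.volumeIoiPow (dim E - 1))) := by
    rw [← μ.measurePreserving_homeomorphUnitSphereProd.lintegral_comp
      (f := fun p : sphere (0:E) 1 × Ioi (0:ℝ) => f p.2.1)
      (hf.comp (measurable_subtype_coe.comp measurable_snd))]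
    simp [homeomorphUnitSphereProd]
  rw [h1]
  have h2 : ∫⁻ p : sphere (0:E) 1 × Ioi (0:ℝ), f p.2.1
        ∂(μ.toSphere.prod (.volumeIoiPow (dim E - 1)))
      = μ.toSphere univ * ∫⁻ r : Ioi (0:ℝ), f r.1 ∂(Measure.volumeIoiPow (dim E - 1)) := by
    rw [← lintegral_map (f := fun r : Ioi (0:ℝ) => f r.1) (g := Prod.snd)
      (show Measurable (fun r : Ioi (0:ℝ) => f r.1) from hf.comp measurable_subtype_coe)
      measurable_snd,
      Measure.map_snd_prod, lintegral_smul_measure, smul_eq_mul]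
  rw [h2]
  congr 1
  rw [Measure.volumeIoiPow, lintegral_withDensity_eq_lintegral_mul _
    (show Measurable (fun r : Ioi (0:ℝ) => ENNReal.ofReal (r.1 ^ (dim E - 1))) from
      (measurable_subtype_coe.pow_const _).ennreal_ofReal)
    (show Measurable (fun r : Ioi (0:ℝ) => f r.1) from hf.comp measurable_subtype_coe)]
  exact lintegral_subtype_comap measurableSet_Ioi
    (fun y => ENNReal.ofReal (y ^ (dim E - 1)) * f y)

theorem stmt19 (N : ℕ) (hN : 1 ≤ N) (M : ℝ → ℝ) (hM_smooth : ContDiff ℝ 1 M)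
    (hM_mono : MonotoneOn M (Set.Ici 0)) (hM_zero : M 0 = 0)
    (hM_nonneg : ∀ t : ℝ, 0 ≤ t → 0 ≤ M t)
    (hM_int : IntegrableOn (fun t : ℝ => M t / (t^2 * (Real.log t)^2)) (Set.Ici 2))
    (g : EuclideanSpace ℝ (Fin N) → ℝ) (hg_meas : Measurable g)
    (hg_nonneg : ∀ x, 0 ≤ g x) (c₀ : ℝ) (hc₀ : 0 < c₀)
    (hg : ∀ x : EuclideanSpace ℝ (Fin N), 0 < ‖x‖ → ‖x‖ < 1 →
      g x ≤ c₀ * ‖x‖ ^ (-(N : ℝ)) / (1 + (Real.log ‖x‖)^2)) :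
    IntegrableOn (fun x => M (g x)) (Metric.ball (0 : EuclideanSpace ℝ (Fin N)) 1) := by
  haveI : Nonempty (Fin N) := Fin.pos_iff_nonempty.mp hN
  haveI hnt : Nontrivial (EuclideanSpace ℝ (Fin N)) := inferInstance
  have hdim : dim (EuclideanSpace ℝ (Fin N)) = N := finrank_euclideanSpace_fin
  set F : ℝ → ℝ := fun r => M (c₀ * r ^ (-(N:ℝ)) / (1 + (Real.log r)^2)) with hFdef
  have hFmeas : Measurable F := by
    apply hM_smooth.continuous.measurable.comp
    exact Measurable.div (measurable_const.mul (by fun_prop))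
      (measurable_const.add (Real.measurable_log.pow_const 2))
  set fE : ℝ → ENNReal :=
    fun r => Set.indicator (Set.Ioo 0 1) (fun r => ENNReal.ofReal (F r)) r with hfEdef
  have hfEmeas : Measurable fE := (hFmeas.ennreal_ofReal).indicator measurableSet_Ioo
  constructor
  · exact (hM_smooth.continuous.measurable.comp hg_meas).aestronglyMeasurable
  · rw [hasFiniteIntegral_iff_norm]
    have hzero : (volume : Measure (EuclideanSpace ℝ (Fin N))) {0} = 0 := measure_singleton 0
    have step1 : ∫⁻ x in Metric.ball (0 : EuclideanSpace ℝ (Fin N)) 1,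
        ENNReal.ofReal ‖M (g x)‖ ≤ ∫⁻ x in Metric.ball (0 : EuclideanSpace ℝ (Fin N)) 1,
        fE ‖x‖ := by
      apply lintegral_mono_ae
      have hne : ∀ᵐ x : EuclideanSpace ℝ (Fin N) ∂volume, x ≠ 0 := by
        rw [ae_iff]
        simpa using hzero
      filter_upwards [ae_restrict_mem measurableSet_ball, ae_restrict_of_ae hne]
        with x hx hxne
      have hx0 : 0 < ‖x‖ := norm_pos_iff.mpr hxne
      have hx1 : ‖x‖ < 1 := by simpa [Metric.mem_ball, dist_zero_right] using hx
      have hmem : ‖x‖ ∈ Set.Ioo (0:ℝ) 1 := ⟨hx0, hx1⟩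
      rw [hfEdef]
      simp only [Set.indicator_of_mem hmem]
      rw [Real.norm_eq_abs, abs_of_nonneg (hM_nonneg _ (hg_nonneg x))]
      apply ENNReal.ofReal_le_ofReal
      exact hM_mono (Set.mem_Ici.mpr (hg_nonneg x)) (Set.mem_Ici.mpr (by positivity)) (hg x hx0 hx1)
    refine lt_of_le_of_lt (le_trans step1 (setLIntegral_le_lintegral _ _)) ?_
    rw [lintegral_fun_norm_addHaar' volume (fun r => fE r) hfEmeas, hdim]
    apply ENNReal.mul_lt_top (measure_lt_top _ _)
    have h1 : ∀ y ∈ Ioi (0:ℝ), ENNReal.ofReal (y ^ (N-1)) * fE y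
        = Set.indicator (Set.Ioo 0 1)
            (fun r => ENNReal.ofReal (r ^ (N-1) * F r)) y := by
      intro y hy
      by_cases hmem : y ∈ Set.Ioo (0:ℝ) 1
      · rw [hfEdef]
        simp only [Set.indicator_of_mem hmem]
        rw [← ENNReal.ofReal_mul (pow_nonneg (le_of_lt hy) _)]
      · rw [hfEdef]
        simp only [Set.indicator_of_notMem hmem, mul_zero]
    rw [setLIntegral_congr_fun measurableSet_Ioi h1,
      lintegral_indicator measurableSet_Ioo, Measure.restrict_restrict measurableSet_Ioo,
      Set.inter_eq_self_of_subset_left Set.Ioo_subset_Ioi_self]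
    exact (key_radial N hN M hM_smooth hM_mono hM_nonneg hM_int c₀ hc₀).lintegral_lt_top
end
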